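/- arXiv:2003.05038 — 5 statements merged into one kernel-verified Lean document; each statement's English description precedes it below -/
import Mathlib

section
/- Let H_#(x) have tail \(\overline{H_\#}(x) = c_1 x^{β}(\log x)^{ξ}\exp(-λ(\log x)^{γ})\) for x > x_0, with γ > 1, λ, c_1 > 0, β, ξ ∈ ℝ. If G = (1/(1−H_#))^← and ζ(x) = x (log x) G'(x)/G(x), then ζ(x) ~ γ^{−1} λ^{−1/γ} (log x)^{1/γ} as x → ∞. -/
open Filter Real Set MeasureTheory

/-- For lognormal-type tails
`H̄#(x) = c₁ x^β (log x)^ξ exp (-λ (log x)^γ)` (`γ > 1`, `λ, c₁ > 0`),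
if `G = (1/(1-H#))^←` (so `H̄#(G x) = x⁻¹` for large `x`) and
`ζ x = x log x · G'(x)/G(x)`, then `ζ x ~ γ⁻¹ λ^{-1/γ} (log x)^{1/γ}` as `x → ∞`. -/
theorem stmt5 (Hbar G g ζ : ℝ → ℝ) (c₁ lam γ β ξ x₀ : ℝ)
    (hγ : 1 < γ) (hlam : 0 < lam) (hc₁ : 0 < c₁)
    (hHbar : ∀ x > x₀, Hbar x =
      c₁ * x ^ β * (Real.log x) ^ ξ * Real.exp (-lam * (Real.log x) ^ γ))
    (hGtop : Tendsto G atTop atTop)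
    (hGpos : ∀ᶠ x in atTop, 0 < G x)
    (hGderiv : ∀ᶠ x in atTop, HasDerivAt G (g x) x)
    (hGinv : ∀ᶠ x in atTop, Hbar (G x) = x⁻¹)
    (hζ : ∀ x, ζ x = g x / G x * (x * Real.log x)) :
    Tendsto (fun x => ζ x / (Real.log x) ^ (1 / γ)) atTop
      (nhds (γ⁻¹ * lam ^ (-(1 / γ)))) := by
  have hγ0 : (0:ℝ) < γ := lt_trans one_pos hγ
  have hγ1 : (0:ℝ) < γ - 1 := by linarith
  set u : ℝ → ℝ := fun x => Real.log (G x) with hu_def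
  have hu_top : Tendsto u atTop atTop := Real.tendsto_log_atTop.comp hGtop
  -- the big-G eventual bound we use everywhere
  have hGbig : ∀ᶠ x in atTop, max x₀ (Real.exp 1) < G x :=
    hGtop.eventually (eventually_gt_atTop _)
  have hubig : ∀ᶠ x in atTop, 1 < u x := by
    filter_upwards [hGbig] with x hx
    have h1 : Real.exp 1 < G x := lt_of_le_of_lt (le_max_right _ _) hx
    have h0 : (0:ℝ) < G x := lt_trans (Real.exp_pos 1) h1
    calc (1:ℝ) = Real.log (Real.exp 1) := (Real.log_exp 1).symm
      _ < Real.log (G x) := Real.log_lt_log (Real.exp_pos 1) h1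
  -- STEP A : key identity
  have hA : ∀ᶠ x in atTop, Real.log x
      = lam * (u x) ^ γ - Real.log c₁ - β * u x - ξ * Real.log (u x) := by
    filter_upwards [hGinv, hGbig, hubig, eventually_gt_atTop 0] with x hinv hGx hux hx
    have h1 : x₀ < G x := lt_of_le_of_lt (le_max_left _ _) hGx
    have h0 : (0:ℝ) < G x := lt_trans (lt_of_lt_of_le (Real.exp_pos 1) (le_max_right _ _)) hGx
    have hux0 : (0:ℝ) < u x := lt_trans one_pos hux
    have heq : x⁻¹ = c₁ * (G x) ^ β * (u x) ^ ξ * Real.exp (-lam * (u x) ^ γ) := by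
      rw [← hinv, hHbar (G x) h1]
    have hl : Real.log (x⁻¹) = Real.log c₁ + β * u x + ξ * Real.log (u x)
        + (-lam * (u x) ^ γ) := by
      rw [heq, Real.log_mul (by positivity) (Real.exp_ne_zero _),
        Real.log_mul (by positivity) (by positivity),
        Real.log_mul (ne_of_gt hc₁) (by positivity),
        Real.log_rpow h0, Real.log_rpow hux0, Real.log_exp]
    rw [Real.log_inv] at hl
    linarith
  -- STEP B : log x / u^γ → lam
  have hugam : Tendsto (fun x => (u x) ^ γ) atTop atTop :=
    (tendsto_rpow_atTop hγ0).comp hu_top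
  have t2 : Tendsto (fun x => Real.log c₁ / (u x) ^ γ) atTop (nhds 0) :=
    tendsto_const_nhds.div_atTop hugam
  have t3 : Tendsto (fun x => u x / (u x) ^ γ) atTop (nhds 0) := by
    refine ((tendsto_rpow_neg_atTop hγ1).comp hu_top).congr' ?_
    filter_upwards [hubig] with x hux
    have h0 : (0:ℝ) < u x := lt_trans one_pos hux
    simp only [Function.comp_apply]
    rw [neg_sub, Real.rpow_sub h0, Real.rpow_one]
  have t4 : Tendsto (fun x => Real.log (u x) / (u x) ^ γ) atTop (nhds 0) :=
    ((isLittleO_log_rpow_atTop hγ0).tendsto_div_nhds_zero).comp hu_top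
  have hB : Tendsto (fun x => Real.log x / (u x) ^ γ) atTop (nhds lam) := by
    have := ((tendsto_const_nhds (x := lam)).sub t2).sub ((t3.const_mul β).add (t4.const_mul ξ))
    rw [sub_zero, show lam - (β * 0 + ξ * 0) = lam by ring] at this
    refine this.congr' ?_
    filter_upwards [hA, hubig] with x hAx hux
    have h0 : (0:ℝ) < (u x) ^ γ := Real.rpow_pos_of_pos (lt_trans one_pos hux) γ
    rw [hAx]; field_simp; ring
  -- STEP C : u / (log x)^(1/γ) → lam^(-(1/γ))
  have hloggt : ∀ᶠ x in atTop, 0 < Real.log x :=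
    Real.tendsto_log_atTop.eventually (eventually_gt_atTop 0)
  have hBinv : Tendsto (fun x => (u x) ^ γ / Real.log x) atTop (nhds lam⁻¹) := by
    have := hB.inv₀ (ne_of_gt hlam)
    refine this.congr' ?_
    filter_upwards [hloggt, hubig] with x hlx hux
    rw [inv_div]
  have hC : Tendsto (fun x => u x / (Real.log x) ^ (1/γ)) atTop (nhds (lam ^ (-(1/γ)))) := by
    have h1 : Tendsto (fun x => ((u x) ^ γ / Real.log x) ^ (1/γ)) atTop
        (nhds ((lam⁻¹) ^ (1/γ))) :=
      hBinv.rpow_const (Or.inr (by positivity))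
    have h2 : (lam⁻¹ : ℝ) ^ (1/γ) = lam ^ (-(1/γ)) := by
      rw [← Real.rpow_neg_one lam, ← Real.rpow_mul hlam.le]; ring_nf
    rw [h2] at h1
    refine h1.congr' ?_
    filter_upwards [hloggt, hubig] with x hlx hux
    have h0 : (0:ℝ) < u x := lt_trans one_pos hux
    rw [Real.div_rpow (by positivity) hlx.le, ← Real.rpow_mul h0.le,
      mul_one_div, div_self (ne_of_gt hγ0), Real.rpow_one]
  -- STEP D : the function D and ζ = log x / D
  set D : ℝ → ℝ := fun x => lam * γ * (u x) ^ (γ - 1) - β - ξ / u x with hD_def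
  have hDtop : Tendsto D atTop atTop := by
    have h1 : Tendsto (fun x => lam * γ * (u x) ^ (γ - 1)) atTop atTop :=
      ((tendsto_rpow_atTop hγ1).comp hu_top).const_mul_atTop (by positivity)
    have h2 : Tendsto (fun x => -β - ξ / u x) atTop (nhds (-β - 0)) :=
      tendsto_const_nhds.sub (tendsto_const_nhds.div_atTop hu_top)
    have := h1.atTop_add h2
    refine this.congr fun x => ?_
    simp only [hD_def]; ring
  have hD1 : ∀ᶠ x in atTop, 1 ≤ D x := hDtop.eventually (eventually_ge_atTop 1)
  obtain ⟨a, ha⟩ := eventually_atTop.1 hGinv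
  have hzeta : ∀ᶠ x in atTop, ζ x = Real.log x / D x := by
    filter_upwards [hGderiv, hGbig, hubig, hD1, eventually_gt_atTop (max a 0), hGpos]
      with x hgx hGx hux hDx hax hGpos'
    have hx0 : (0:ℝ) < x := lt_of_le_of_lt (le_max_right a 0) hax
    have hux0 : (0:ℝ) < u x := lt_trans one_pos hux
    set u' := (G x)⁻¹ * g x with hu'_def
    have hu' : HasDerivAt u u' x := (Real.hasDerivAt_log (ne_of_gt hGpos')).comp x hgx
    have hcont : ContinuousAt G x := hgx.continuousAt
    have hnbG : ∀ᶠ y in nhds x, max x₀ (Real.exp 1) < G y := hcont (Ioi_mem_nhds hGx)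
    have hnbx : ∀ᶠ y in nhds x, max a 0 < y := eventually_gt_nhds hax
    have hLeq : (fun y => Real.log c₁ + β * u y + ξ * Real.log (u y) - lam * (u y) ^ γ)
        =ᶠ[nhds x] (fun y => -Real.log y) := by
      filter_upwards [hnbG, hnbx] with y hGy hy
      have hy0 : (0:ℝ) < y := lt_of_le_of_lt (le_max_right a 0) hy
      have h1 : x₀ < G y := lt_of_le_of_lt (le_max_left _ _) hGy
      have hGy0 : (0:ℝ) < G y := lt_trans (lt_of_lt_of_le (Real.exp_pos 1) (le_max_right _ _)) hGy
      have huy0 : (0:ℝ) < u y := by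
        have h2 : Real.exp 1 < G y := lt_of_le_of_lt (le_max_right _ _) hGy
        have h3 := Real.log_lt_log (Real.exp_pos 1) h2
        rw [Real.log_exp] at h3
        simp only [hu_def]; linarith
      have heq : y⁻¹ = c₁ * (G y) ^ β * (u y) ^ ξ * Real.exp (-lam * (u y) ^ γ) := by
        rw [← ha y (le_of_lt (lt_of_le_of_lt (le_max_left a 0) hy)), hHbar (G y) h1]
      have hl : Real.log (y⁻¹) = Real.log c₁ + β * u y + ξ * Real.log (u y)
          + (-lam * (u y) ^ γ) := by
        rw [heq, Real.log_mul (by positivity) (Real.exp_ne_zero _),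
          Real.log_mul (by positivity) (by positivity),
          Real.log_mul (ne_of_gt hc₁) (by positivity),
          Real.log_rpow hGy0, Real.log_rpow huy0, Real.log_exp]
      rw [Real.log_inv] at hl
      linarith
    have hL : HasDerivAt (fun y => Real.log c₁ + β * u y + ξ * Real.log (u y) - lam * (u y) ^ γ)
        (β * u' + ξ * ((u x)⁻¹ * u') - lam * (γ * (u x) ^ (γ - 1) * u')) x := by
      have h2 : HasDerivAt (fun y => Real.log (u y)) ((u x)⁻¹ * u') x :=
        (Real.hasDerivAt_log (ne_of_gt hux0)).comp x hu'
      have h3 : HasDerivAt (fun y => (u y) ^ γ) (γ * (u x) ^ (γ - 1) * u') x :=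
        (Real.hasDerivAt_rpow_const (Or.inl (ne_of_gt hux0))).comp x hu'
      exact (((hu'.const_mul β).const_add (Real.log c₁)).add (h2.const_mul ξ)).sub
        (h3.const_mul lam)
    have hR : HasDerivAt (fun y => -Real.log y) (-x⁻¹) x :=
      (Real.hasDerivAt_log (ne_of_gt hx0)).neg
    have hL2 : HasDerivAt (fun y => Real.log c₁ + β * u y + ξ * Real.log (u y) - lam * (u y) ^ γ)
        (-x⁻¹) x := hLeq.hasDerivAt_iff.mpr hR
    have hkey : β * u' + ξ * ((u x)⁻¹ * u') - lam * (γ * (u x) ^ (γ - 1) * u') = -x⁻¹ :=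
      hL.unique hL2
    have hDne : (0:ℝ) < D x := lt_of_lt_of_le zero_lt_one hDx
    have hu'eq : u' = 1 / (x * D x) := by
      rw [eq_div_iff (by positivity)]
      simp only [hD_def]
      field_simp at hkey
      field_simp
      linarith [hkey]
    rw [hζ x, div_eq_inv_mul, ← hu'_def, hu'eq]
    field_simp
  -- STEP F : D x * (log x)^(1/γ - 1) → γ * lam^(1/γ)
  have hγinv1 : (0:ℝ) < 1 - 1/γ := by
    have : 1/γ < 1 := by rw [div_lt_one hγ0]; exact hγ
    linarith
  have hd1 : Tendsto (fun x => lam * γ * (u x / (Real.log x) ^ (1/γ)) ^ (γ - 1)) atTop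
      (nhds (lam * γ * (lam ^ (-(1/γ))) ^ (γ - 1))) :=
    (hC.rpow_const (Or.inr hγ1.le)).const_mul _
  have hval : lam * γ * (lam ^ (-(1/γ))) ^ (γ - 1) = γ * lam ^ (1/γ) := by
    rw [← Real.rpow_mul hlam.le]
    rw [show lam * γ * lam ^ (-(1/γ) * (γ - 1)) = γ * (lam ^ (1:ℝ) * lam ^ (-(1/γ) * (γ - 1)))
      by rw [Real.rpow_one]; ring]
    rw [← Real.rpow_add hlam]
    congr 1
    field_simp
    congr 1; ring
  have hlogexp : Tendsto (fun x => (Real.log x) ^ (1/γ - 1)) atTop (nhds 0) := by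
    have := (tendsto_rpow_neg_atTop hγinv1).comp Real.tendsto_log_atTop
    refine this.congr fun x => ?_
    simp only [Function.comp_apply]
    norm_num
  have hd2 : Tendsto (fun x => (β + ξ / u x) * (Real.log x) ^ (1/γ - 1)) atTop (nhds 0) := by
    have e1 : Tendsto (fun x => β + ξ / u x) atTop (nhds (β + 0)) :=
      tendsto_const_nhds.add (tendsto_const_nhds.div_atTop hu_top)
    have := e1.mul hlogexp
    rw [mul_zero] at this
    exact this
  have hF : Tendsto (fun x => D x * (Real.log x) ^ (1/γ - 1)) atTop (nhds (γ * lam ^ (1/γ))) := by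
    have h := hd1.sub hd2
    rw [sub_zero, hval] at h
    refine h.congr' ?_
    filter_upwards [hloggt, hubig] with x hlx hux
    have hux0 : (0:ℝ) < u x := lt_trans one_pos hux
    have key : (u x / (Real.log x) ^ (1/γ)) ^ (γ - 1)
        = (u x) ^ (γ - 1) * (Real.log x) ^ (1/γ - 1) := by
      rw [Real.div_rpow hux0.le (by positivity), ← Real.rpow_mul hlx.le,
        div_eq_mul_inv, ← Real.rpow_neg hlx.le]
      congr 1
      field_simp
      congr 1; ring
    rw [key]
    simp only [hD_def]
    ring
  -- FINISH
  have hpos : (0:ℝ) < γ * lam ^ (1/γ) := by positivity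
  have hfin := hF.inv₀ (ne_of_gt hpos)
  have hval2 : (γ * lam ^ (1/γ))⁻¹ = γ⁻¹ * lam ^ (-(1/γ)) := by
    rw [mul_inv, ← Real.rpow_neg hlam.le]
  rw [hval2] at hfin
  refine hfin.congr' ?_
  filter_upwards [hzeta, hloggt, hD1] with x hzx hlx hDx
  have hD0 : (0:ℝ) < D x := lt_of_lt_of_le zero_lt_one hDx
  have hL0 : (0:ℝ) < (Real.log x) ^ (1/γ) := Real.rpow_pos_of_pos hlx _
  rw [hzx]
  rw [show (1/γ - 1 : ℝ) = 1/γ + (-1) by ring, Real.rpow_add hlx, Real.rpow_neg_one]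
  field_simp
end

section
/- Let H_#(x) have tail \(\overline{H_\#}(x) = c_1 x^{β}(\log x)^{ξ}\exp(λ(\log x)^{γ})\exp(-ρ\exp(μ(\log x)^{α}))\) for x > x_0, with 0 < α < 1, c_1, μ, ρ > 0, and β, ξ, λ, γ ∈ ℝ. If G = (1/(1−H_#))^← and ζ(x) = x (log x) G'(x)/G(x), then ζ(x) ~ α^{−1} μ^{−1/α} (log log x)^{(1−α)/α} as x → ∞. -/
open Filter Real Set MeasureTheory

lemma aux_rpow_exp (μ α k : ℝ) (hμ : 0 < μ) (hα : 0 < α) :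
    Tendsto (fun t : ℝ => t ^ k / Real.exp (μ * t ^ α)) atTop (nhds 0) := by
  have h := (tendsto_rpow_mul_exp_neg_mul_atTop_nhds_zero (k / α) μ hμ).comp
    (tendsto_rpow_atTop hα)
  refine h.congr' ?_
  filter_upwards [eventually_gt_atTop (0 : ℝ)] with t ht
  have h1 : (t ^ α) ^ (k / α) = t ^ k := by
    rw [← Real.rpow_mul ht.le]
    congr 1
    field_simp
  simp only [Function.comp, neg_mul, Real.exp_neg]
  rw [h1, div_eq_mul_inv]

lemma aux_hasDerivAt (c₁ μ ρ α lam γ β ξ : ℝ) (y : ℝ) (hy : 0 < y) (hly : 1 < Real.log y) :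
    HasDerivAt (fun z => Real.log c₁ + β * Real.log z + ξ * Real.log (Real.log z) +
      lam * Real.log z ^ γ - ρ * Real.exp (μ * Real.log z ^ α))
      ((β + ξ / Real.log y + lam * γ * Real.log y ^ (γ - 1) -
        ρ * μ * α * Real.log y ^ (α - 1) * Real.exp (μ * Real.log y ^ α)) / y) y := by
  have hyne : y ≠ 0 := hy.ne'
  have hlpos : 0 < Real.log y := lt_trans one_pos hly
  have hlne : Real.log y ≠ 0 := hlpos.ne'
  have hlog := Real.hasDerivAt_log hyne
  have hll := (Real.hasDerivAt_log hlne).comp y hlog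
  have hgam := (Real.hasDerivAt_rpow_const (p := γ) (Or.inl hlne)).comp y hlog
  have halp := (Real.hasDerivAt_rpow_const (p := α) (Or.inl hlne)).comp y hlog
  have hexp := (Real.hasDerivAt_exp (μ * Real.log y ^ α)).comp y (halp.const_mul μ)
  have h := ((((hlog.const_mul β).const_add (Real.log c₁)).add (hll.const_mul ξ)).add
      (hgam.const_mul lam)).sub (hexp.const_mul ρ)
  have h2 : HasDerivAt (fun z => Real.log c₁ + β * Real.log z + ξ * Real.log (Real.log z) +
      lam * Real.log z ^ γ - ρ * Real.exp (μ * Real.log z ^ α))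
      (β * y⁻¹ + ξ * ((Real.log y)⁻¹ * y⁻¹) + lam * (γ * Real.log y ^ (γ - 1) * y⁻¹) -
        ρ * (Real.exp (μ * Real.log y ^ α) * (μ * (α * Real.log y ^ (α - 1) * y⁻¹)))) y := h
  convert h2 using 1
  field_simp

/-- For super-lognormal-type tails
`H̄#(x) = c₁ x^β (log x)^ξ exp (λ (log x)^γ) exp (-ρ exp (μ (log x)^α))`
(`0 < α < 1`, `c₁, μ, ρ > 0`), if `G` satisfies `H̄#(G x) = x⁻¹` for large `x` and
`ζ x = x log x · G'(x)/G(x)`, then `ζ x ~ α⁻¹ μ^{-1/α} (log log x)^{(1-α)/α}`. -/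
theorem stmt6 (Hbar G g ζ : ℝ → ℝ) (c₁ μ ρ α lam γ β ξ x₀ : ℝ)
    (hα1 : 0 < α) (hα2 : α < 1) (hc₁ : 0 < c₁) (hμ : 0 < μ) (hρ : 0 < ρ)
    (hHbar : ∀ x > x₀, Hbar x =
      c₁ * x ^ β * (Real.log x) ^ ξ * Real.exp (lam * (Real.log x) ^ γ) *
        Real.exp (-ρ * Real.exp (μ * (Real.log x) ^ α)))
    (hGtop : Tendsto G atTop atTop)
    (hGpos : ∀ᶠ x in atTop, 0 < G x)
    (hGderiv : ∀ᶠ x in atTop, HasDerivAt G (g x) x)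
    (hGinv : ∀ᶠ x in atTop, Hbar (G x) = x⁻¹)
    (hζ : ∀ x, ζ x = g x / G x * (x * Real.log x)) :
    Tendsto (fun x => ζ x / (Real.log (Real.log x)) ^ ((1 - α) / α)) atTop
      (nhds (α⁻¹ * μ ^ (-(1 / α)))) := by
  set L : ℝ → ℝ := fun x => Real.log (G x) with hL_def
  set E : ℝ → ℝ := fun x => Real.exp (μ * L x ^ α) with hE_def
  set P : ℝ → ℝ := fun x => Real.log c₁ + β * L x + ξ * Real.log (L x) + lam * L x ^ γ
    with hP_def
  set B : ℝ → ℝ := fun x => β + ξ / L x + lam * γ * L x ^ (γ - 1) -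
      ρ * μ * α * L x ^ (α - 1) * E x with hB_def
  have hL : Tendsto L atTop atTop := Real.tendsto_log_atTop.comp hGtop
  have hLα : Tendsto (fun x => L x ^ α) atTop atTop := (tendsto_rpow_atTop hα1).comp hL
  have hE : Tendsto E atTop atTop :=
    Real.tendsto_exp_atTop.comp (hLα.const_mul_atTop hμ)
  have hL1 : ∀ᶠ x in atTop, 1 < L x := hL.eventually_gt_atTop 1
  have hEpos : ∀ x, 0 < E x := fun x => Real.exp_pos _
  -- (a) L^k / E → 0
  have hLk : ∀ k : ℝ, Tendsto (fun x => L x ^ k / E x) atTop (nhds 0) := fun k =>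
    (aux_rpow_exp μ α k hμ hα1).comp hL
  -- Step 1: key identity
  have hkey : ∀ᶠ x in atTop, Real.log x + P x = ρ * E x := by
    filter_upwards [hGinv, hGpos, hGtop.eventually_gt_atTop x₀, hL1,
      eventually_gt_atTop (0 : ℝ)] with x hinv hGx hGx0 hLx hx0
    have hLpos : 0 < L x := lt_trans one_pos hLx
    have hform := hHbar (G x) hGx0
    rw [hinv] at hform
    have h1 : Real.log (x⁻¹) = Real.log (c₁ * G x ^ β * L x ^ ξ *
        Real.exp (lam * L x ^ γ) * Real.exp (-ρ * Real.exp (μ * L x ^ α))) := by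
      rw [← hform]
    have hb : (0:ℝ) < G x ^ β := Real.rpow_pos_of_pos hGx β
    have hxi : (0:ℝ) < L x ^ ξ := Real.rpow_pos_of_pos hLpos ξ
    rw [Real.log_inv, Real.log_mul (by positivity) (Real.exp_ne_zero _),
      Real.log_mul (by positivity) (Real.exp_ne_zero _),
      Real.log_mul (by positivity) hxi.ne', Real.log_mul hc₁.ne' hb.ne',
      Real.log_exp, Real.log_exp, Real.log_rpow hGx, Real.log_rpow hLpos] at h1
    simp only [hP_def, hE_def, hL_def] at *
    linarith
  -- P / E → 0
  have hPE : Tendsto (fun x => P x / E x) atTop (nhds 0) := by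
    have t1 : Tendsto (fun x => Real.log c₁ * (E x)⁻¹) atTop (nhds (Real.log c₁ * 0)) :=
      tendsto_const_nhds.mul hE.inv_tendsto_atTop
    have hL1E : Tendsto (fun x => L x / E x) atTop (nhds 0) :=
      (hLk 1).congr (fun x => by rw [Real.rpow_one])
    have hlogdiv : Tendsto (fun x => Real.log (L x) / L x) atTop (nhds 0) :=
      (Real.isLittleO_log_id_atTop.tendsto_div_nhds_zero).comp hL
    have t3 : Tendsto (fun x => Real.log (L x) / E x) atTop (nhds 0) := by
      have := hlogdiv.mul hL1E
      rw [mul_zero] at this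
      refine this.congr' ?_
      filter_upwards [hL1] with x hLx
      have hLpos : (0:ℝ) < L x := lt_trans one_pos hLx
      field_simp
    have hsum : Tendsto (fun x => Real.log c₁ * (E x)⁻¹ + β * (L x / E x) +
        ξ * (Real.log (L x) / E x) + lam * (L x ^ γ / E x)) atTop
        (nhds (Real.log c₁ * 0 + β * 0 + ξ * 0 + lam * 0)) :=
      ((t1.add (hL1E.const_mul β)).add (t3.const_mul ξ)).add ((hLk γ).const_mul lam)
    norm_num at hsum
    refine hsum.congr (fun x => ?_)
    simp only [hP_def]
    ring
  -- log x / E → ρ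
  have hlogE : Tendsto (fun x => Real.log x / E x) atTop (nhds ρ) := by
    have h1 : Tendsto (fun x => ρ - P x / E x) atTop (nhds (ρ - 0)) :=
      tendsto_const_nhds.sub hPE
    rw [sub_zero] at h1
    refine h1.congr' ?_
    filter_upwards [hkey] with x hx
    rw [eq_div_iff (hEpos x).ne', sub_mul, div_mul_cancel₀ _ (hEpos x).ne']
    linarith
  -- Q := B * L^(1-α) / E → -(ρ μ α)
  have hQ : Tendsto (fun x => B x * L x ^ (1 - α) / E x) atTop (nhds (-(ρ * μ * α))) := by
    have hR : Tendsto (fun x => β * (L x ^ (1 - α) / E x) + ξ * (L x ^ (-α) / E x) +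
        lam * γ * (L x ^ (γ - α) / E x) - ρ * μ * α) atTop
        (nhds (β * 0 + ξ * 0 + lam * γ * 0 - ρ * μ * α)) :=
      ((((hLk (1 - α)).const_mul β).add ((hLk (-α)).const_mul ξ)).add
        ((hLk (γ - α)).const_mul (lam * γ))).sub tendsto_const_nhds
    norm_num at hR
    refine hR.congr' ?_
    filter_upwards [hL1] with x hLx
    have hLpos : (0:ℝ) < L x := lt_trans one_pos hLx
    have e1 : L x ^ (γ - 1) * L x ^ (1 - α) = L x ^ (γ - α) := by
      rw [← Real.rpow_add hLpos]; ring_nf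
    have e2 : L x ^ (α - 1) * L x ^ (1 - α) = 1 := by
      rw [← Real.rpow_add hLpos]
      norm_num
    have e3 : L x ^ (1 - α) / L x = L x ^ (-α) := by
      rw [div_eq_mul_inv, ← Real.rpow_neg_one (L x), ← Real.rpow_add hLpos]
      ring_nf
    have key : B x * L x ^ (1 - α) = β * L x ^ (1 - α) + ξ * L x ^ (-α) +
        lam * γ * L x ^ (γ - α) - ρ * μ * α * E x := by
      simp only [hB_def]
      linear_combination ξ * e3 + lam * γ * e1 - ρ * μ * α * E x * e2
    rw [eq_comm, div_eq_iff (hEpos x).ne', key]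
    have hEE := mul_inv_cancel₀ (hEpos x).ne'
    linear_combination (-(β * L x ^ (1 - α) + ξ * L x ^ (-α) + lam * γ * L x ^ (γ - α))) * hEE
  -- B < 0 eventually
  have hBneg : ∀ᶠ x in atTop, B x < 0 := by
    have h0 : ∀ᶠ x in atTop, B x * L x ^ (1 - α) / E x < 0 :=
      hQ.eventually_lt_const (neg_lt_zero.mpr (by positivity))
    filter_upwards [h0, hL1] with x hx hLx
    have hLpos : (0:ℝ) < L x := lt_trans one_pos hLx
    have hA : (0:ℝ) < L x ^ (1 - α) := Real.rpow_pos_of_pos hLpos _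
    have hE' := hEpos x
    by_contra h'
    push_neg at h'
    have : 0 ≤ B x * L x ^ (1 - α) / E x := by positivity
    linarith
  -- Step 2: ζ = -log x / B eventually
  have hζB : ∀ᶠ x in atTop, ζ x = -Real.log x / B x := by
    have hFGev : ∀ᶠ t in atTop, Real.log c₁ + β * Real.log (G t) +
        ξ * Real.log (Real.log (G t)) + lam * Real.log (G t) ^ γ -
        ρ * Real.exp (μ * Real.log (G t) ^ α) = -Real.log t := by
      filter_upwards [hkey] with t ht
      simp only [hP_def, hE_def, hL_def] at ht
      linarith
    rw [eventually_atTop] at hFGev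
    obtain ⟨a, ha⟩ := hFGev
    filter_upwards [hGderiv, hGpos, hL1, hBneg, eventually_gt_atTop a,
      eventually_gt_atTop (0 : ℝ)] with x hg hGx hLx hBx hax hx0
    have hFy := aux_hasDerivAt c₁ μ ρ α lam γ β ξ (G x) hGx hLx
    have hchain := hFy.comp x hg
    have heq : (fun t => -Real.log t) =ᶠ[nhds x]
        ((fun z => Real.log c₁ + β * Real.log z + ξ * Real.log (Real.log z) +
          lam * Real.log z ^ γ - ρ * Real.exp (μ * Real.log z ^ α)) ∘ G) := by
      refine Filter.eventuallyEq_of_mem (Ioi_mem_nhds hax) (fun t ht => ?_)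
      exact (ha t (le_of_lt ht)).symm
    have hder1 : HasDerivAt (fun t => -Real.log t)
        ((β + ξ / Real.log (G x) + lam * γ * Real.log (G x) ^ (γ - 1) -
          ρ * μ * α * Real.log (G x) ^ (α - 1) * Real.exp (μ * Real.log (G x) ^ α)) / G x
          * g x) x := heq.hasDerivAt_iff.mpr hchain
    have hder2 : HasDerivAt (fun t => -Real.log t) (-x⁻¹) x :=
      (Real.hasDerivAt_log hx0.ne').neg
    have huniq := hder1.unique hder2
    have hBGx : (β + ξ / Real.log (G x) + lam * γ * Real.log (G x) ^ (γ - 1) -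
        ρ * μ * α * Real.log (G x) ^ (α - 1) * Real.exp (μ * Real.log (G x) ^ α)) = B x := by
      simp only [hB_def, hE_def, hL_def]
    rw [hBGx] at huniq
    have hBne : B x ≠ 0 := ne_of_lt hBx
    rw [hζ, div_mul_eq_mul_div, div_eq_div_iff hGx.ne' hBne]
    field_simp at huniq
    linear_combination Real.log x * huniq
  -- ζ / L^(1-α) → (μ α)⁻¹
  have hζL : Tendsto (fun x => ζ x / L x ^ (1 - α)) atTop (nhds ((μ * α)⁻¹)) := by
    have hne : -(ρ * μ * α) ≠ 0 := ne_of_lt (neg_lt_zero.mpr (by positivity))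
    have h1 : Tendsto (fun x => -(Real.log x / E x) / (B x * L x ^ (1 - α) / E x)) atTop
        (nhds (-ρ / -(ρ * μ * α))) := (hlogE.neg).div hQ hne
    have hval : -ρ / -(ρ * μ * α) = (μ * α)⁻¹ := by
      field_simp
    rw [hval] at h1
    refine h1.congr' ?_
    filter_upwards [hζB, hBneg, hL1] with x hzx hBx hLx
    rw [← neg_div, div_div_div_cancel_right₀ (hEpos x).ne', hzx, div_div]
  -- μ L^α / log log x → 1
  have hll_top : Tendsto (fun x => Real.log (Real.log x)) atTop atTop :=
    Real.tendsto_log_atTop.comp Real.tendsto_log_atTop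
  have hllx : Tendsto (fun x => μ * L x ^ α / Real.log (Real.log x)) atTop (nhds 1) := by
    have hratio : Tendsto (fun x => ρ * E x / Real.log x) atTop (nhds 1) := by
      have h := (hlogE.inv₀ hρ.ne').const_mul ρ
      rw [mul_inv_cancel₀ hρ.ne'] at h
      refine h.congr (fun x => ?_)
      rw [inv_div, mul_div_assoc]
    have hlograt : Tendsto (fun x => Real.log (ρ * E x / Real.log x)) atTop (nhds 0) := by
      have h := (Real.continuousAt_log one_ne_zero).tendsto.comp hratio
      rwa [Real.log_one] at h
    have hdiff : Tendsto (fun x => μ * L x ^ α - Real.log (Real.log x)) atTop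
        (nhds (0 - Real.log ρ)) := by
      refine (hlograt.sub tendsto_const_nhds).congr' ?_
      filter_upwards [Real.tendsto_log_atTop.eventually_gt_atTop 0] with x hlx
      rw [Real.log_div (by positivity) hlx.ne', Real.log_mul hρ.ne' (hEpos x).ne',
        Real.log_exp]
      ring
    have h2 : Tendsto (fun x => 1 + (μ * L x ^ α - Real.log (Real.log x)) /
        Real.log (Real.log x)) atTop (nhds (1 + 0)) :=
      tendsto_const_nhds.add (hdiff.div_atTop hll_top)
    norm_num at h2
    refine h2.congr' ?_
    filter_upwards [hll_top.eventually_gt_atTop 0] with x hllp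
    field_simp
    ring
  -- assembly
  have hmain := hζL.mul (((hllx.rpow_const (p := (1 - α) / α)) (Or.inl one_ne_zero)).mul_const
    (μ⁻¹ ^ ((1 - α) / α)))
  have hval : (μ * α)⁻¹ * ((1:ℝ) ^ ((1 - α) / α) * μ⁻¹ ^ ((1 - α) / α)) =
      α⁻¹ * μ ^ (-(1 / α)) := by
    have h1 : μ⁻¹ ^ ((1 - α) / α) = μ ^ (-((1 - α) / α)) := by
      rw [Real.inv_rpow hμ.le, ← Real.rpow_neg hμ.le]
    have h2 : -(1 / α) = -1 + -((1 - α) / α) := by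
      field_simp
      ring
    rw [Real.one_rpow, one_mul, h1, h2, Real.rpow_add hμ, Real.rpow_neg_one, mul_inv]
    ring
  rw [hval] at hmain
  refine hmain.congr' ?_
  filter_upwards [hL1, hll_top.eventually_gt_atTop 0] with x hLx hllp
  have hLpos : (0:ℝ) < L x := lt_trans one_pos hLx
  have hLα : (0:ℝ) < L x ^ α := Real.rpow_pos_of_pos hLpos α
  have hA : (μ * L x ^ α / Real.log (Real.log x)) ^ ((1 - α) / α) * μ⁻¹ ^ ((1 - α) / α) =
      (μ * L x ^ α / Real.log (Real.log x) * μ⁻¹) ^ ((1 - α) / α) :=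
    (Real.mul_rpow (by positivity) (by positivity)).symm
  have hB2 : μ * L x ^ α / Real.log (Real.log x) * μ⁻¹ = L x ^ α / Real.log (Real.log x) := by
    field_simp
  have hC : (L x ^ α / Real.log (Real.log x)) ^ ((1 - α) / α) =
      L x ^ (1 - α) / Real.log (Real.log x) ^ ((1 - α) / α) := by
    rw [Real.div_rpow hLα.le hllp.le, ← Real.rpow_mul hLpos.le]
    congr 2
    field_simp
  rw [hA, hB2, hC]
  have hD : (0:ℝ) < L x ^ (1 - α) := Real.rpow_pos_of_pos hLpos _
  have hE2 : (0:ℝ) < Real.log (Real.log x) ^ ((1 - α) / α) := Real.rpow_pos_of_pos hllp _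
  field_simp
end

section
/- Let {S_n} be a random walk with i.i.d. ℕ_0-valued steps with step distribution F satisfying \overline{F}(n) = n^{−β}L(n) ∈ RV_{−β}, 0 < β < 1, started at 0, with range A = {S_n : n ≥ 0}. Then for every C > 0 there exists c > 0 such that for all n, P_0(#(A ∩ [0,n]) ≥ c n^β log n / L(n)) ≤ n^{−C}. -/
open Filter MeasureTheory ProbabilityTheory
open scoped ENNReal

/-- A positive function slowly varying at infinity. -/
def SlowlyVarying (L : ℝ → ℝ) : Prop :=
  (∀ᶠ x in Filter.atTop, 0 < L x) ∧
    ∀ c > (0:ℝ), Filter.Tendsto (fun x => L (c * x) / L x) Filter.atTop (nhds 1)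

namespace Stmt12Aux

/-- partial sums -/
def sPart (x : ℕ → ℕ) (j : ℕ) : ℕ := ∑ k ∈ Finset.range j, x k

lemma sPart_succ (x : ℕ → ℕ) (j : ℕ) : sPart x (j+1) = sPart x j + x j :=
  Finset.sum_range_succ x j

lemma sPart_mono (x : ℕ → ℕ) : Monotone (sPart x) := fun i j h =>
  Finset.sum_le_sum_of_subset (Finset.range_subset_range.2 h)

lemma sPart_congr {x y : ℕ → ℕ} {N : ℕ} (h : ∀ k < N, x k = y k) {j : ℕ} (hj : j ≤ N) :
    sPart x j = sPart y j :=
  Finset.sum_congr rfl fun k hk => h k (lt_of_lt_of_le (Finset.mem_range.1 hk) hj)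

/-- counted jump condition -/
def Xc (n : ℕ) (x : ℕ → ℕ) (k : ℕ) : Prop := 1 ≤ x k ∧ sPart x (k+1) ≤ n

instance (n x k) : Decidable (Xc n x k) := by unfold Xc; infer_instance

lemma Xc_congr {x y : ℕ → ℕ} {N : ℕ} (h : ∀ k < N, x k = y k) {n k : ℕ} (hk : k + 1 ≤ N) :
    Xc n x k ↔ Xc n y k := by
  unfold Xc
  rw [h k (lt_of_lt_of_le (Nat.lt_succ_self k) hk), sPart_congr h hk]

noncomputable def Zf (n : ℕ) (b : ℝ≥0∞) (x : ℕ → ℕ) (k : ℕ) : ℝ≥0∞ :=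
  if Xc n x k then 2*b else if 1 ≤ x k then b else 1

lemma Zf_congr {x y : ℕ → ℕ} {N : ℕ} (h : ∀ k < N, x k = y k) {n : ℕ} {b : ℝ≥0∞} {k : ℕ}
    (hk : k + 1 ≤ N) : Zf n b x k = Zf n b y k := by
  have hxy := h k (lt_of_lt_of_le (Nat.lt_succ_self k) hk)
  unfold Zf
  by_cases hX : Xc n x k
  · rw [if_pos hX, if_pos ((Xc_congr h hk).1 hX)]
  · rw [if_neg hX, if_neg (fun hY => hX ((Xc_congr h hk).2 hY)), hxy]

noncomputable def Mf (n : ℕ) (b : ℝ≥0∞) (x : ℕ → ℕ) (N : ℕ) : ℝ≥0∞ := ∏ k ∈ Finset.range N, Zf n b x k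

lemma Mf_congr {x y : ℕ → ℕ} {N : ℕ} (h : ∀ k < N, x k = y k) {n : ℕ} {b : ℝ≥0∞} :
    Mf n b x N = Mf n b y N :=
  Finset.prod_congr rfl fun k hk => Zf_congr h (Finset.mem_range.1 hk)

lemma Mf_succ (n : ℕ) (b : ℝ≥0∞) (x : ℕ → ℕ) (N : ℕ) :
    Mf n b x (N+1) = Mf n b x N * Zf n b x N :=
  Finset.prod_range_succ _ N

def cnt (n : ℕ) (x : ℕ → ℕ) (j : ℕ) : ℕ := ∑ k ∈ Finset.range j, if Xc n x k then 1 else 0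

lemma cnt_congr {x y : ℕ → ℕ} {N : ℕ} (h : ∀ k < N, x k = y k) {n j : ℕ} (hj : j ≤ N) :
    cnt n x j = cnt n y j :=
  Finset.sum_congr rfl fun k hk =>
    if_congr (Xc_congr h (le_trans (Finset.mem_range.1 hk) hj)) rfl rfl

def Goodf (n m : ℕ) (x : ℕ → ℕ) (j : ℕ) : Prop := sPart x j ≤ n ∧ m ≤ cnt n x j

instance (n m x j) : Decidable (Goodf n m x j) := by unfold Goodf; infer_instance

lemma Goodf_congr {x y : ℕ → ℕ} {N : ℕ} (h : ∀ k < N, x k = y k) {n m j : ℕ} (hj : j ≤ N) :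
    Goodf n m x j ↔ Goodf n m y j := by
  unfold Goodf
  rw [sPart_congr h hj, cnt_congr h hj]

def GoodUpTo (n m N : ℕ) (x : ℕ → ℕ) : Prop := ∃ j ≤ N, Goodf n m x j

instance (n m N x) : Decidable (GoodUpTo n m N x) :=
  decidable_of_iff (¬ ∀ j ≤ N, ¬ Goodf n m x j) (by simp [GoodUpTo])

lemma GoodUpTo_congr {x y : ℕ → ℕ} {N : ℕ} (h : ∀ k < N, x k = y k) {n m : ℕ} :
    GoodUpTo n m N x ↔ GoodUpTo n m N y := by
  unfold GoodUpTo
  exact exists_congr fun j => and_congr_right fun hj => Goodf_congr h hj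

noncomputable def Wf (n m : ℕ) (b : ℝ≥0∞) (x : ℕ → ℕ) (N : ℕ) : ℝ≥0∞ :=
  if GoodUpTo n m N x then (2*b)^m else Mf n b x N

/-- if the walk is still `≤ n` at time `j` then the product equals `(2b)^(cnt j)`. -/
lemma Mf_eq_pow {n j : ℕ} {x : ℕ → ℕ} (hle : sPart x j ≤ n) (b : ℝ≥0∞) :
    Mf n b x j = (2*b) ^ (cnt n x j) := by
  have h1 : ∀ k ∈ Finset.range j, Zf n b x k = (2*b) ^ (if Xc n x k then 1 else 0) := by
    intro k hk
    have hk' : k + 1 ≤ j := Finset.mem_range.1 hk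
    by_cases hx : 1 ≤ x k
    · have hXc : Xc n x k := ⟨hx, le_trans (sPart_mono x hk') hle⟩
      simp [Zf, hXc]
    · have hXc : ¬ Xc n x k := fun h => hx h.1
      simp [Zf, hXc, hx]
  rw [Mf, Finset.prod_congr rfl h1, Finset.prod_pow_eq_pow_sum]
  rfl

lemma pow_le_Mf {n m j : ℕ} {x : ℕ → ℕ} {b : ℝ≥0∞} (hb : 1 ≤ 2*b)
    (hg : Goodf n m x j) : (2*b)^m ≤ Mf n b x j := by
  rw [Mf_eq_pow hg.1 b]
  exact pow_le_pow_right₀ hb hg.2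


/-- Combinatorial core: if the range of the partial-sum walk meets `[0,n]` in at least
`m+1` points, then there is a good time. -/
lemma exists_good {n m : ℕ} {x : ℕ → ℕ}
    (h : m + 1 ≤ (Set.range (sPart x) ∩ Set.Iic n).ncard) :
    ∃ N, Goodf n m x N := by
  classical
  set f := sPart x with hf
  have hfin : (Set.range f ∩ Set.Iic n).Finite :=
    (Set.finite_Iic n).subset Set.inter_subset_right
  set A : Finset ℕ := hfin.toFinset with hA
  have hmemA : ∀ v, v ∈ A ↔ (∃ N, f N = v) ∧ v ≤ n := by
    intro v
    rw [hA, Set.Finite.mem_toFinset]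
    simp [Set.mem_range, Set.mem_Iic]
  have hcard : m + 1 ≤ A.card := by
    rwa [hA, ← Set.ncard_eq_toFinset_card _ hfin]
  -- the hitting-time function
  set g : ℕ → ℕ := fun v => if hv : ∃ N, f N = v then Nat.find hv else 0 with hg
  have hg_hit : ∀ v, (∃ N, f N = v) → f (g v) = v := by
    intro v hv
    rw [hg]; simp only [dif_pos hv]
    exact Nat.find_spec hv
  have hg_min : ∀ v (hv : ∃ N, f N = v), ∀ j < g v, f j ≠ v := by
    intro v hv j hj
    rw [hg] at hj; simp only [dif_pos hv] at hj
    exact Nat.find_min hv hj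
  have hAne : A.Nonempty := Finset.card_pos.1 (lt_of_lt_of_le (Nat.succ_pos m) hcard)
  set vmax := A.max' hAne with hvmax
  have hvmaxA : vmax ∈ A := A.max'_mem hAne
  set N₀ := g vmax with hN₀
  have hfN₀ : f N₀ = vmax := hg_hit vmax ((hmemA vmax).1 hvmaxA).1
  -- every nonzero v in A gives a counted index below N₀
  have key : ∀ v ∈ A.erase 0, (g v - 1) + 1 = g v ∧ Xc n x (g v - 1) ∧ g v - 1 < N₀ := by
    intro v hv
    have hv0 : v ≠ 0 := Finset.ne_of_mem_erase hv
    have hvA : v ∈ A := Finset.mem_of_mem_erase hv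
    have hvex : ∃ N, f N = v := ((hmemA v).1 hvA).1
    have hvn : v ≤ n := ((hmemA v).1 hvA).2
    have hg1 : 1 ≤ g v := by
      rcases Nat.eq_zero_or_pos (g v) with h0 | h1
      · exfalso
        have := hg_hit v hvex
        rw [h0] at this
        exact hv0 (by simpa [hf, sPart] using this.symm)
      · exact h1
    have hsub : (g v - 1) + 1 = g v := Nat.succ_pred_eq_of_pos hg1
    have hflt : f (g v - 1) < v := by
      have hne : f (g v - 1) ≠ v := hg_min v hvex _ (Nat.sub_lt hg1 Nat.one_pos)
      have hle : f (g v - 1) ≤ f (g v) := sPart_mono x (Nat.sub_le _ _)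
      rw [hg_hit v hvex] at hle
      exact lt_of_le_of_ne hle hne
    have hxpos : 1 ≤ x (g v - 1) := by
      by_contra hx
      have hx0 : x (g v - 1) = 0 := Nat.eq_zero_of_not_pos hx
      have : f ((g v - 1) + 1) = f (g v - 1) := by
        rw [hf, sPart_succ, hx0, Nat.add_zero]
      rw [hsub, hg_hit v hvex] at this
      omega
    have hXc : Xc n x (g v - 1) := by
      refine ⟨hxpos, ?_⟩
      rw [hsub]
      have : f (g v) = v := hg_hit v hvex
      rw [hf] at this
      rw [this]; exact hvn
    have hgle : g v ≤ N₀ := by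
      by_contra hcon
      push_neg at hcon
      have hmono : f N₀ ≤ f (g v) := sPart_mono x (le_of_lt hcon)
      rw [hfN₀, hg_hit v hvex] at hmono
      have hvle : v ≤ vmax := A.le_max' v hvA
      have : v = vmax := le_antisymm hvle hmono
      rw [this] at hcon
      exact absurd rfl (ne_of_gt (lt_of_le_of_lt (le_refl _) hcon) : N₀ ≠ N₀)
    exact ⟨hsub, hXc, by omega⟩
  -- count
  have hcnt : m ≤ cnt n x N₀ := by
    have hcard' : m ≤ (A.erase 0).card := by
      have := Finset.pred_card_le_card_erase (a := 0) (s := A)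
      omega
    have hinj : ∀ v ∈ A.erase 0, ∀ w ∈ A.erase 0,
        (fun v => g v - 1) v = (fun v => g v - 1) w → v = w := by
      intro v hv w hw hvw
      obtain ⟨h1s, -, -⟩ := key v hv
      obtain ⟨h2s, -, -⟩ := key w hw
      simp only at hvw
      have : g v = g w := by omega
      have hvA : v ∈ A := Finset.mem_of_mem_erase hv
      have hwA : w ∈ A := Finset.mem_of_mem_erase hw
      have := congrArg f this
      rwa [hg_hit v ((hmemA v).1 hvA).1, hg_hit w ((hmemA w).1 hwA).1] at this
    have hmaps : ∀ v ∈ A.erase 0, g v - 1 ∈ (Finset.range N₀).filter (fun k => Xc n x k) := by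
      intro v hv
      obtain ⟨_, hXc, hlt⟩ := key v hv
      exact Finset.mem_filter.2 ⟨Finset.mem_range.2 hlt, hXc⟩
    have hle := Finset.card_le_card_of_injOn (fun v => g v - 1) hmaps hinj
    have : ((Finset.range N₀).filter (fun k => Xc n x k)).card = cnt n x N₀ := by
      rw [cnt, Finset.card_filter]
    omega
  exact ⟨N₀, by rw [Goodf, ← hf]; exact ⟨le_of_eq_of_le hfN₀ ((hmemA vmax).1 hvmaxA).2, hcnt⟩⟩




section Main

variable {Ω : Type*} [MeasurableSpace Ω] (P : Measure Ω) [IsProbabilityMeasure P]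

/-- Any subset of ℕ is measurable. -/
lemma natSet_meas (s : Set ℕ) : MeasurableSet s := (Set.to_countable s).measurableSet

lemma main_bound (ξ : ℕ → Ω → ℕ) (hmeas : ∀ k, Measurable (ξ k))
    (hindep : iIndepFun ξ P)
    (hident : ∀ k, IdentDistrib (ξ k) (ξ 0) P P)
    (n m : ℕ) (hn : 1 ≤ n) (hm : 1 ≤ m)
    (ht0 : P {ω | n < ξ 0 ω} ≠ 0) :
    P {ω | m + 1 ≤ (Set.range (sPart (fun k => ξ k ω)) ∩ Set.Iic n).ncard} ≤
      (((P {ω | 1 ≤ ξ 0 ω} - P {ω | n < ξ 0 ω}) + P {ω | 1 ≤ ξ 0 ω}) /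
        (2 * P {ω | 1 ≤ ξ 0 ω})) ^ m := by
  classical
  set p := P {ω | 1 ≤ ξ 0 ω} with hp_def
  set t := P {ω | n < ξ 0 ω} with ht_def
  have hsub_tp : {ω | n < ξ 0 ω} ⊆ {ω | 1 ≤ ξ 0 ω} := fun ω hω => by
    simp only [Set.mem_setOf_eq] at *; omega
  have ht_le_p : t ≤ p := measure_mono hsub_tp
  have hp_ne0 : p ≠ 0 := fun h => ht0 (le_antisymm (h ▸ ht_le_p) (zero_le))
  have hp_le1 : p ≤ 1 := prob_le_one
  have hp_netop : p ≠ ⊤ := ne_top_of_le_ne_top ENNReal.one_ne_top hp_le1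
  have ht_netop : t ≠ ⊤ := ne_top_of_le_ne_top hp_netop ht_le_p
  set D : ℝ≥0∞ := (p - t) + p with hD_def
  have hD_ne0 : D ≠ 0 := fun h => hp_ne0 (by
    have : p ≤ D := le_add_self
    exact le_antisymm (h ▸ this) (zero_le))
  have hD_le2p : D ≤ 2 * p := by
    rw [hD_def, two_mul]
    exact add_le_add_left tsub_le_self p
  have hD_netop : D ≠ ⊤ := by
    refine ne_top_of_le_ne_top ?_ hD_le2p
    exact ENNReal.mul_ne_top (by norm_num) hp_netop
  set b : ℝ≥0∞ := p / D with hb_def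
  have h2b_eq : 2 * b = (2 * p) / D := by
    rw [hb_def, ← mul_div_assoc]
  have h2b : 1 ≤ 2 * b := by
    rw [h2b_eq, ENNReal.le_div_iff_mul_le (Or.inl hD_ne0) (Or.inl hD_netop), one_mul]
    exact hD_le2p
  -- measurability toolkit
  have measS : ∀ j, Measurable (fun ω => sPart (fun k => ξ k ω) j) := by
    intro j
    have : (fun ω => sPart (fun k => ξ k ω) j) = fun ω => ∑ k ∈ Finset.range j, ξ k ω := rfl
    rw [this]
    exact Finset.measurable_sum _ (fun k _ => hmeas k)
  have measXset : ∀ k, MeasurableSet {ω | Xc n (fun i => ξ i ω) k} := by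
    intro k
    have : {ω | Xc n (fun i => ξ i ω) k} =
        (ξ k) ⁻¹' {y | 1 ≤ y} ∩ (fun ω => sPart (fun i => ξ i ω) (k+1)) ⁻¹' {y | y ≤ n} := rfl
    rw [this]
    exact ((hmeas k) (natSet_meas _)).inter ((measS (k+1)) (natSet_meas _))
  have meas1set : ∀ k, MeasurableSet {ω | 1 ≤ ξ k ω} := fun k => (hmeas k) (natSet_meas _)
  have measZ : ∀ k, Measurable (fun ω => Zf n b (fun i => ξ i ω) k) := by
    intro k
    unfold Zf
    exact Measurable.ite (measXset k) measurable_const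
      (Measurable.ite (meas1set k) measurable_const measurable_const)
  have measM : ∀ N, Measurable (fun ω => Mf n b (fun i => ξ i ω) N) := by
    intro N
    unfold Mf
    exact Finset.measurable_prod _ (fun k _ => measZ k)
  have measCnt : ∀ j, Measurable (fun ω => cnt n (fun i => ξ i ω) j) := by
    intro j
    unfold cnt
    exact Finset.measurable_sum _ (fun k _ =>
      Measurable.ite (measXset k) measurable_const measurable_const)
  have measGoodSet : ∀ j, MeasurableSet {ω | Goodf n m (fun i => ξ i ω) j} := by
    intro j
    have : {ω | Goodf n m (fun i => ξ i ω) j} =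
        (fun ω => sPart (fun i => ξ i ω) j) ⁻¹' {y | y ≤ n} ∩
        (fun ω => cnt n (fun i => ξ i ω) j) ⁻¹' {y | m ≤ y} := rfl
    rw [this]
    exact ((measS j) (natSet_meas _)).inter ((measCnt j) (natSet_meas _))
  set G : ℕ → Set Ω := fun N => {ω | GoodUpTo n m N (fun i => ξ i ω)} with hG_def
  have measGU : ∀ N, MeasurableSet (G N) := by
    intro N
    have : G N = ⋃ j, ⋃ _ : j ≤ N, {ω | Goodf n m (fun i => ξ i ω) j} := by
      ext ω
      simp [hG_def, GoodUpTo, Set.mem_iUnion]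
    rw [this]
    exact MeasurableSet.iUnion fun j => MeasurableSet.iUnion fun _ => measGoodSet j
  set W : ℕ → Ω → ℝ≥0∞ := fun N ω => Wf n m b (fun i => ξ i ω) N with hW_def
  have measW : ∀ N, Measurable (W N) := by
    intro N
    unfold W
    unfold Wf
    exact Measurable.ite (measGU N) measurable_const (measM N)
  -- the ζ integral bound
  set ζs : ℕ → ℕ → ℝ≥0∞ := fun s y => if 1 ≤ y ∧ s + y ≤ n then 2*b else if 1 ≤ y then b else 1
    with hζs_def
  have hζint : ∀ s : ℕ, ∫⁻ ω, ζs s (ξ 0 ω) ∂P ≤ 1 := by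
    intro s
    set A1 : Set Ω := {ω | 1 ≤ ξ 0 ω ∧ s + ξ 0 ω ≤ n} with hA1
    set A2 : Set Ω := {ω | 1 ≤ ξ 0 ω ∧ ¬ (s + ξ 0 ω ≤ n)} with hA2
    set A3 : Set Ω := {ω | ¬ 1 ≤ ξ 0 ω} with hA3
    have hA1m : MeasurableSet A1 := (hmeas 0) (natSet_meas {y | 1 ≤ y ∧ s + y ≤ n})
    have hA2m : MeasurableSet A2 := (hmeas 0) (natSet_meas {y | 1 ≤ y ∧ ¬ (s + y ≤ n)})
    have hA3m : MeasurableSet A3 := (hmeas 0) (natSet_meas {y | ¬ 1 ≤ y})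
    have hsplit : ∀ ω, ζs s (ξ 0 ω) =
        A1.indicator (fun _ => 2*b) ω + A2.indicator (fun _ => b) ω +
          A3.indicator (fun _ => 1) ω := by
      intro ω
      by_cases h1 : 1 ≤ ξ 0 ω <;> by_cases h2 : s + ξ 0 ω ≤ n
      · have h0 : ¬ (ξ 0 ω = 0) := by omega
        simp [hζs_def, hA1, hA2, hA3, Set.indicator_apply, h1, h2, h0]
      · have h0 : ¬ (ξ 0 ω = 0) := by omega
        have h2' : n < s + ξ 0 ω := by omega
        simp [hζs_def, hA1, hA2, hA3, Set.indicator_apply, h1, h2, h0, h2']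
      · have h0 : ξ 0 ω = 0 := by omega
        simp [hζs_def, hA1, hA2, hA3, Set.indicator_apply, h1, h2, h0]
      · have h0 : ξ 0 ω = 0 := by omega
        simp [hζs_def, hA1, hA2, hA3, Set.indicator_apply, h1, h2, h0]
    have hint : ∫⁻ ω, ζs s (ξ 0 ω) ∂P = 2*b * P A1 + b * P A2 + 1 * P A3 := by
      rw [lintegral_congr hsplit]
      rw [lintegral_add_right _ (measurable_const.indicator hA3m),
        lintegral_add_right _ (measurable_const.indicator hA2m),
        lintegral_indicator_const hA1m, lintegral_indicator_const hA2m,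
        lintegral_indicator_const hA3m]
    rw [hint, one_mul]
    have hq_le : P A1 ≤ p - t := by
      have hdisj2 : Disjoint A1 {ω | n < ξ 0 ω} := by
        rw [Set.disjoint_left]
        intro ω hω1 hω2
        simp only [hA1, Set.mem_setOf_eq] at *
        omega
      have hun : A1 ∪ {ω | n < ξ 0 ω} ⊆ {ω | 1 ≤ ξ 0 ω} := by
        intro ω hω
        rcases hω with h | h
        · exact h.1
        · exact hsub_tp h
      have hq : P A1 + t ≤ p := by
        rw [ht_def, ← measure_union hdisj2 ((hmeas 0) (natSet_meas {y | n < y}))]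
        exact measure_mono hun
      exact ENNReal.le_sub_of_add_le_right ht_netop hq
    have hqr : P A1 + P A2 = p := by
      have hdisj : Disjoint A1 A2 := by
        rw [Set.disjoint_left]
        intro ω h1 h2
        exact h2.2 h1.2
      rw [← measure_union hdisj hA2m]
      congr 1
      ext ω
      simp only [hA1, hA2, Set.mem_union, Set.mem_setOf_eq]
      tauto
    have hu : p + P A3 = 1 := by
      have hA3c : A3 = {ω | 1 ≤ ξ 0 ω}ᶜ := rfl
      rw [hp_def, hA3c, measure_add_measure_compl (meas1set 0), measure_univ]
    calc 2*b * P A1 + b * P A2 + P A3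
        = (b * P A1 + (b * P A1 + b * P A2)) + P A3 := by ring
      _ = (b * P A1 + b * (P A1 + P A2)) + P A3 := by rw [mul_add]
      _ = (b * P A1 + b * p) + P A3 := by rw [hqr]
      _ ≤ (b * (p - t) + b * p) + P A3 :=
          add_le_add_left (add_le_add_left (mul_le_mul_right hq_le b) _) _
      _ = b * D + P A3 := by rw [hD_def, mul_add]
      _ = p + P A3 := by rw [hb_def, ENNReal.div_mul_cancel hD_ne0 hD_netop]
      _ = 1 := hu
  -- independence helper
  have hφζ : ∀ (N : ℕ) (φf : (ℕ → ℕ) → ℝ≥0∞),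
      (∀ x y : ℕ → ℕ, (∀ k < N, x k = y k) → φf x = φf y) → ∀ ζ : ℕ → ℝ≥0∞,
      ∫⁻ ω, φf (fun k => ξ k ω) * ζ (ξ N ω) ∂P =
        (∫⁻ ω, φf (fun k => ξ k ω) ∂P) * ∫⁻ ω, ζ (ξ N ω) ∂P := by
    intro N φf hloc ζ
    set T₁ : Ω → ({i // i ∈ Finset.range N} → ℕ) := fun ω i => ξ i.1 ω with hT₁
    set T₂ : Ω → ({i // i ∈ ({N} : Finset ℕ)} → ℕ) := fun ω i => ξ i.1 ω with hT₂
    set ψ : ({i // i ∈ Finset.range N} → ℕ) → ℝ≥0∞ :=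
      fun v => φf (fun k => if h : k ∈ Finset.range N then v ⟨k, h⟩ else 0) with hψ
    set ζ' : ({i // i ∈ ({N} : Finset ℕ)} → ℕ) → ℝ≥0∞ :=
      fun v => ζ (v ⟨N, Finset.mem_singleton_self N⟩) with hζ'
    have hcomp1 : ∀ ω, φf (fun k => ξ k ω) = ψ (T₁ ω) := by
      intro ω
      show φf (fun k => ξ k ω) =
        φf (fun k => if h : k ∈ Finset.range N then ξ k ω else 0)
      exact hloc _ _ (fun k hk => by rw [dif_pos (Finset.mem_range.2 hk)])
    have hdisj : Disjoint (Finset.range N) ({N} : Finset ℕ) := by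
      simp [Finset.disjoint_singleton_right]
    have hIndep := (hindep.indepFun_finset (Finset.range N) {N} hdisj hmeas).comp
      (measurable_of_countable ψ) (measurable_of_countable ζ')
    have hT₁m : Measurable T₁ := measurable_pi_lambda _ (fun i => hmeas i.1)
    have hT₂m : Measurable T₂ := measurable_pi_lambda _ (fun i => hmeas i.1)
    have hmul := lintegral_mul_eq_lintegral_mul_lintegral_of_indepFun
      ((measurable_of_countable ψ).comp hT₁m) ((measurable_of_countable ζ').comp hT₂m) hIndep
    calc ∫⁻ ω, φf (fun k => ξ k ω) * ζ (ξ N ω) ∂P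
        = ∫⁻ ω, (ψ ∘ T₁ * ζ' ∘ T₂) ω ∂P := lintegral_congr fun ω => by
          simp only [Pi.mul_apply, Function.comp_apply]
          rw [hcomp1 ω]
      _ = (∫⁻ ω, (ψ ∘ T₁) ω ∂P) * ∫⁻ ω, (ζ' ∘ T₂) ω ∂P := hmul
      _ = (∫⁻ ω, φf (fun k => ξ k ω) ∂P) * ∫⁻ ω, ζ (ξ N ω) ∂P := by
          congr 1
          exact (lintegral_congr fun ω => (hcomp1 ω)).symm
  -- the one-step supermartingale inequality
  have hstep : ∀ N, ∫⁻ ω, W (N+1) ω ∂P ≤ ∫⁻ ω, W N ω ∂P := by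
    intro N
    set φs : ℕ → (ℕ → ℕ) → ℝ≥0∞ := fun s x =>
      if ¬ GoodUpTo n m N x ∧ sPart x N = s then Mf n b x N else 0 with hφs
    have hloc : ∀ s, ∀ x y : ℕ → ℕ, (∀ k < N, x k = y k) → φs s x = φs s y := by
      intro s x y h
      have h1 : GoodUpTo n m N x ↔ GoodUpTo n m N y := GoodUpTo_congr h
      have h2 : sPart x N = sPart y N := sPart_congr h le_rfl
      have h3 : Mf n b x N = Mf n b y N := Mf_congr h
      simp only [hφs, h1, h2, h3]
    have measφ : ∀ s, Measurable (fun ω => φs s (fun k => ξ k ω)) := by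
      intro s
      have hset : MeasurableSet ({ω | ¬ GoodUpTo n m N (fun k => ξ k ω)} ∩
          ((fun ω => sPart (fun k => ξ k ω) N) ⁻¹' {s})) :=
        ((measGU N).compl).inter ((measS N) (natSet_meas {s}))
      have : (fun ω => φs s (fun k => ξ k ω)) = fun ω =>
          if ω ∈ ({ω | ¬ GoodUpTo n m N (fun k => ξ k ω)} ∩
            ((fun ω => sPart (fun k => ξ k ω) N) ⁻¹' {s}))
          then Mf n b (fun k => ξ k ω) N else 0 := by
        funext ω
        simp only [hφs, Set.mem_inter_iff, Set.mem_setOf_eq, Set.mem_preimage,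
          Set.mem_singleton_iff]
      rw [this]
      exact Measurable.ite hset (measM N) measurable_const
    have hpt1 : ∀ ω, (if ¬ GoodUpTo n m N (fun k => ξ k ω) then
        Mf n b (fun k => ξ k ω) N * Zf n b (fun k => ξ k ω) N else 0)
        = ∑' s, φs s (fun k => ξ k ω) * ζs s (ξ N ω) := by
      intro ω
      have hZ : ζs (sPart (fun k => ξ k ω) N) (ξ N ω) = Zf n b (fun k => ξ k ω) N := by
        simp only [hζs_def, Zf, Xc, sPart_succ]
      rw [tsum_eq_single (sPart (fun k => ξ k ω) N) ?_]
      · by_cases hGd : GoodUpTo n m N (fun k => ξ k ω)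
        · simp [hφs, hGd]
        · simp [hφs, hGd, hZ]
      · intro s hs
        have hc : ¬ (¬ GoodUpTo n m N (fun k => ξ k ω) ∧
            sPart (fun k => ξ k ω) N = s) := fun h => hs h.2.symm
        simp [hφs, hc]
    have hpt2 : ∀ ω, W N ω = (G N).indicator (fun _ => (2*b)^m) ω +
        (if ¬ GoodUpTo n m N (fun k => ξ k ω) then Mf n b (fun k => ξ k ω) N else 0) := by
      intro ω
      by_cases hGd : GoodUpTo n m N (fun k => ξ k ω)
      · simp [hW_def, Wf, hGd, Set.indicator_apply, hG_def]
      · simp [hW_def, Wf, hGd, Set.indicator_apply, hG_def]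
    have hpt0 : ∀ ω, W (N+1) ω ≤ (G N).indicator (fun _ => (2*b)^m) ω +
        (if ¬ GoodUpTo n m N (fun k => ξ k ω) then
          Mf n b (fun k => ξ k ω) N * Zf n b (fun k => ξ k ω) N else 0) := by
      intro ω
      by_cases hGd : GoodUpTo n m N (fun k => ξ k ω)
      · have hGd' : GoodUpTo n m (N+1) (fun k => ξ k ω) := by
          obtain ⟨j, hj, hgood⟩ := hGd
          exact ⟨j, le_trans hj (Nat.le_succ N), hgood⟩
        simp [hW_def, Wf, hGd', hGd, Set.indicator_apply, hG_def]
      · have hGN : ω ∉ G N := hGd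
        rw [Set.indicator_apply, if_neg hGN, if_pos hGd, zero_add]
        show Wf n m b (fun k => ξ k ω) (N+1) ≤ _
        rw [← Mf_succ]
        unfold Wf
        by_cases hGd1 : GoodUpTo n m (N+1) (fun k => ξ k ω)
        · rw [if_pos hGd1]
          obtain ⟨j, hj, hgood⟩ := hGd1
          have hjN : j = N+1 := by
            by_cases hj' : j ≤ N
            · exact absurd ⟨j, hj', hgood⟩ hGd
            · omega
          exact pow_le_Mf h2b (hjN ▸ hgood)
        · rw [if_neg hGd1]
    have hmid : ∫⁻ ω, (if ¬ GoodUpTo n m N (fun k => ξ k ω) then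
        Mf n b (fun k => ξ k ω) N * Zf n b (fun k => ξ k ω) N else 0) ∂P ≤
        ∫⁻ ω, (if ¬ GoodUpTo n m N (fun k => ξ k ω) then Mf n b (fun k => ξ k ω) N else 0) ∂P := by
      have measprod : ∀ s, Measurable (fun ω => φs s (fun k => ξ k ω) * ζs s (ξ N ω)) :=
        fun s => (measφ s).mul ((measurable_of_countable (ζs s)).comp (hmeas N))
      rw [lintegral_congr hpt1, lintegral_tsum (fun s => (measprod s).aemeasurable)]
      have hterm : ∀ s, (∫⁻ ω, φs s (fun k => ξ k ω) * ζs s (ξ N ω) ∂P) ≤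
          ∫⁻ ω, φs s (fun k => ξ k ω) ∂P := by
        intro s
        rw [hφζ N (φs s) (hloc s) (ζs s)]
        have hNζ : ∫⁻ ω, ζs s (ξ N ω) ∂P = ∫⁻ ω, ζs s (ξ 0 ω) ∂P := by
          rw [← lintegral_map (measurable_of_countable _) (hmeas N),
            ← lintegral_map (measurable_of_countable _) (hmeas 0), (hident N).map_eq]
        calc (∫⁻ ω, φs s (fun k => ξ k ω) ∂P) * ∫⁻ ω, ζs s (ξ N ω) ∂P
            ≤ (∫⁻ ω, φs s (fun k => ξ k ω) ∂P) * 1 :=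
              mul_le_mul_right (le_trans (le_of_eq hNζ) (hζint s)) _
          _ = ∫⁻ ω, φs s (fun k => ξ k ω) ∂P := mul_one _
      refine le_trans (ENNReal.tsum_le_tsum hterm) ?_
      rw [← lintegral_tsum (fun s => (measφ s).aemeasurable)]
      refine le_of_eq (lintegral_congr ?_)
      intro ω
      rw [tsum_eq_single (sPart (fun k => ξ k ω) N) ?_]
      · by_cases hGd : GoodUpTo n m N (fun k => ξ k ω) <;> simp [hφs, hGd]
      · intro s hs
        have hc : ¬ (¬ GoodUpTo n m N (fun k => ξ k ω) ∧
            sPart (fun k => ξ k ω) N = s) := fun h => hs h.2.symm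
        simp [hφs, hc]
    calc ∫⁻ ω, W (N+1) ω ∂P
        ≤ ∫⁻ ω, ((G N).indicator (fun _ => (2*b)^m) ω +
            (if ¬ GoodUpTo n m N (fun k => ξ k ω) then
              Mf n b (fun k => ξ k ω) N * Zf n b (fun k => ξ k ω) N else 0)) ∂P :=
          lintegral_mono hpt0
      _ = (∫⁻ ω, (G N).indicator (fun _ => (2*b)^m) ω ∂P) +
            ∫⁻ ω, (if ¬ GoodUpTo n m N (fun k => ξ k ω) then
              Mf n b (fun k => ξ k ω) N * Zf n b (fun k => ξ k ω) N else 0) ∂P :=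
          lintegral_add_left (measurable_const.indicator (measGU N)) _
      _ ≤ (∫⁻ ω, (G N).indicator (fun _ => (2*b)^m) ω ∂P) +
            ∫⁻ ω, (if ¬ GoodUpTo n m N (fun k => ξ k ω) then
              Mf n b (fun k => ξ k ω) N else 0) ∂P := add_le_add_right hmid _
      _ = ∫⁻ ω, W N ω ∂P := by
          rw [← lintegral_add_left (measurable_const.indicator (measGU N))]
          exact (lintegral_congr hpt2).symm
  -- supermartingale bound by induction
  have hWle : ∀ N, ∫⁻ ω, W N ω ∂P ≤ 1 := by
    intro N
    induction N with
    | zero =>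
      have h0 : ∀ ω, W 0 ω = 1 := by
        intro ω
        have hng : ¬ GoodUpTo n m 0 (fun k => ξ k ω) := by
          rintro ⟨j, hj, hgood⟩
          have hj0 : j = 0 := Nat.le_zero.1 hj
          subst hj0
          have := hgood.2
          simp only [cnt, Finset.range_zero, Finset.sum_empty] at this
          omega
        simp [hW_def, Wf, hng, Mf]
      rw [lintegral_congr h0, lintegral_one, measure_univ]
    | succ N ih => exact le_trans (hstep N) ih
  -- conclude
  have hGle : ∀ N, P (G N) ≤ (D / (2*p))^m := by
    intro N
    have hind : ∀ ω, (G N).indicator (fun _ => (2*b)^m) ω ≤ W N ω := by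
      intro ω
      rw [Set.indicator_apply]
      by_cases hGd : ω ∈ G N
      · rw [if_pos hGd]
        have hGd' : GoodUpTo n m N (fun k => ξ k ω) := hGd
        simp [hW_def, Wf, hGd']
      · simp [hGd]
    have h1 : (2*b)^m * P (G N) ≤ 1 := by
      rw [← lintegral_indicator_const (measGU N)]
      exact le_trans (lintegral_mono hind) (hWle N)
    have h2 : P (G N) ≤ ((2*b)^m)⁻¹ := ENNReal.le_inv_iff_mul_le.2 (by rwa [mul_comm] at h1)
    refine le_trans h2 (le_of_eq ?_)
    rw [ENNReal.inv_pow]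
    congr 1
    rw [h2b_eq, ENNReal.inv_div (Or.inl hD_netop) (Or.inl hD_ne0)]
  have hsubEv : {ω | m + 1 ≤ (Set.range (sPart (fun k => ξ k ω)) ∩ Set.Iic n).ncard} ⊆
      ⋃ N, G N := by
    intro ω hω
    obtain ⟨N, hN⟩ := exists_good hω
    exact Set.mem_iUnion.2 ⟨N, ⟨N, le_refl N, hN⟩⟩
  refine le_trans (measure_mono hsubEv) ?_
  have hdirG : Directed (· ⊆ ·) G := by
    intro i j
    refine ⟨max i j, ?_, ?_⟩ <;>
      exact fun ω ⟨k, hk, hgood⟩ => ⟨k, le_trans hk (by omega), hgood⟩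
  rw [Directed.measure_iUnion hdirG]
  exact iSup_le hGle

end Main

end Stmt12Aux


lemma stmt12_R_gt_one {c L T R : ℝ} (hc3 : 3 ≤ c) (hL : Real.log 2 ≤ L)
    (hRT : R * T = c * L) (hT_pos : 0 < T) (hT_le1 : T ≤ 1) (hR_pos : 0 < R) : 1 < R := by
  have h1 : (0.6931471803:ℝ) < Real.log 2 := Real.log_two_gt_d9
  have hL0 : (0:ℝ) ≤ L := le_trans (by norm_num) (le_trans h1.le hL)
  nlinarith [mul_nonneg hR_pos.le (sub_nonneg.2 hT_le1),
    mul_nonneg (sub_nonneg.2 hc3) hL0]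

lemma stmt12_real_tail_bound (n : ℕ) (hn2 : 2 ≤ n) (C c T pR R : ℝ) (m : ℕ)
    (hC : 0 < C) (hc3 : 3 ≤ c) (hcC : 2*C + 2 ≤ c)
    (hT_pos : 0 < T) (hT_le1 : T ≤ 1) (hpR_pos : 0 < pR) (hpR_le1 : pR ≤ 1)
    (hT_le_pR : T ≤ pR)
    (hRT : R * T = c * Real.log n) (hm_ge : R - 1 ≤ (m:ℝ)) :
    (((pR - T) + pR)/(2*pR))^m ≤ (n:ℝ)^(-C) := by
  have hn_pos : (0:ℝ) < n := by positivity
  set r : ℝ := ((pR - T) + pR) / (2 * pR) with hr_def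
  have hr_nonneg : 0 ≤ r := by
    rw [hr_def]
    have : 0 ≤ (pR - T) + pR := by linarith
    positivity
  have hr_le : r ≤ Real.exp (-(T/(2*pR))) := by
    have heq : r = 1 - T/(2*pR) := by
      rw [hr_def]
      field_simp
      ring
    have := Real.add_one_le_exp (-(T/(2*pR)))
    linarith
  have hexp_mono : Real.exp (-(T/(2*pR))) ≤ Real.exp (-(T/2)) := by
    apply Real.exp_le_exp.2
    have h21 : T/2 ≤ T/(2*pR) := by
      have h2pR : 2*pR ≤ 2 := by linarith
      have hstep : (1:ℝ)/2 ≤ 1/(2*pR) :=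
        one_div_le_one_div_of_le (by positivity) h2pR
      calc T/2 = T * (1/2) := by ring
        _ ≤ T * (1/(2*pR)) := mul_le_mul_of_nonneg_left hstep hT_pos.le
        _ = T/(2*pR) := by ring
    linarith
  have hr_le2 : r ≤ Real.exp (-(T/2)) := le_trans hr_le hexp_mono
  have hpow : r ^ m ≤ Real.exp (-(T/2)) ^ m := pow_le_pow_left₀ hr_nonneg hr_le2 m
  refine le_trans hpow ?_
  rw [← Real.exp_nat_mul]
  have hmT : c * Real.log n - 1 ≤ (m:ℝ) * T := by
    nlinarith [mul_le_mul_of_nonneg_right hm_ge hT_pos.le, hRT, hT_le1]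
  have hexp2 : (m:ℝ) * (-(T/2)) ≤ (1 - c * Real.log n)/2 := by linarith
  refine le_trans (Real.exp_le_exp.2 hexp2) ?_
  have hsplit : (1 - c * Real.log n)/2 = 1/2 + Real.log n * (-(c/2)) := by ring
  rw [hsplit, Real.exp_add]
  have hrpow_eq : Real.exp (Real.log n * (-(c/2))) = (n:ℝ) ^ (-(c/2)) := by
    rw [Real.rpow_def_of_pos hn_pos]
  rw [hrpow_eq]
  have hsplit2 : -(c/2) = (-C) + (C - c/2) := by ring
  rw [hsplit2, Real.rpow_add hn_pos, ← mul_assoc]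
  have hnC_pos : (0:ℝ) < (n:ℝ) ^ (-C) := Real.rpow_pos_of_pos hn_pos _
  have hn2R : (2:ℝ) ≤ (n:ℝ) := by exact_mod_cast hn2
  have hfinal : Real.exp (1/2) * (n:ℝ) ^ (C - c/2) ≤ 1 := by
    have hexp_lt2 : Real.exp (1/2) < 2 := by
      have h1 : Real.exp (1/2) * Real.exp (1/2) = Real.exp 1 := by
        rw [← Real.exp_add]; norm_num
      have h2' : Real.exp 1 < 2.7182818286 := Real.exp_one_lt_d9
      nlinarith [Real.exp_pos (1/2), sq_nonneg (Real.exp (1/2) - 2)]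
    have hle : (n:ℝ) ^ (C - c/2) ≤ 1/2 := by
      have h1 : C - c/2 ≤ -1 := by linarith
      have h2' : (n:ℝ) ^ (C - c/2) ≤ (n:ℝ) ^ (-1 : ℝ) :=
        Real.rpow_le_rpow_of_exponent_le (by linarith) h1
      have h3 : (n:ℝ) ^ (-1:ℝ) = ((n:ℝ))⁻¹ := Real.rpow_neg_one n
      have h4 : ((n:ℝ))⁻¹ ≤ 1/2 := by
        rw [inv_le_comm₀ hn_pos (by norm_num)]
        linarith
      linarith [h3 ▸ h2']
    have hpos : (0:ℝ) < (n:ℝ) ^ (C - c/2) := Real.rpow_pos_of_pos hn_pos _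
    nlinarith
  calc Real.exp (1/2) * (n:ℝ) ^ (-C) * (n:ℝ) ^ (C - c/2)
      = (n:ℝ) ^ (-C) * (Real.exp (1/2) * (n:ℝ) ^ (C - c/2)) := by ring
    _ ≤ (n:ℝ) ^ (-C) * 1 := mul_le_mul_of_nonneg_left hfinal hnC_pos.le
    _ = (n:ℝ) ^ (-C) := mul_one _

set_option maxHeartbeats 1000000 in
open Stmt12Aux in
/-- For a random walk with i.i.d. `ℕ`-valued steps whose tail is
`P(ξ > n) = n^{-β} L(n)`, `0 < β < 1`, started at `0`, with range `A = {S_n : n ≥ 0}`: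
for every `C > 0` there is `c > 0` so that for all `n ≥ 1`,
`P(#(A ∩ [0,n]) ≥ c n^β log n / L(n)) ≤ n^{-C}`. -/
theorem stmt12 {Ω : Type*} [MeasurableSpace Ω] (P : Measure Ω) [IsProbabilityMeasure P]
    (β : ℝ) (hβ1 : 0 < β) (hβ2 : β < 1)
    (ξ : ℕ → Ω → ℕ) (Lf : ℝ → ℝ) (hL : SlowlyVarying Lf)
    (hmeas : ∀ k, Measurable (ξ k))
    (hindep : iIndepFun ξ P)
    (hident : ∀ k, IdentDistrib (ξ k) (ξ 0) P P)
    (htail : ∀ n : ℕ, 1 ≤ n →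
      (P {ω | n < ξ 0 ω}).toReal = (n : ℝ) ^ (-β) * Lf n)
    (S : Ω → ℕ → ℕ) (hS : ∀ ω n, S ω n = ∑ k ∈ Finset.range n, ξ k ω) :
    ∀ C > (0:ℝ), ∃ c > (0:ℝ), ∀ n : ℕ, 1 ≤ n →
      (P {ω | c * (n : ℝ) ^ β * Real.log n / Lf n ≤
          ((Set.range (S ω) ∩ Set.Iic n).ncard : ℝ)}).toReal ≤ (n : ℝ) ^ (-C) := by
  intro C hC
  refine ⟨max (2*C + 2) 3, lt_of_lt_of_le (by norm_num) (le_max_right _ _), ?_⟩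
  set c : ℝ := max (2*C + 2) 3 with hc_def
  have hc3 : (3:ℝ) ≤ c := le_max_right _ _
  have hcC : 2*C + 2 ≤ c := le_max_left _ _
  intro n hn
  rcases eq_or_lt_of_le hn with h1 | h2
  · -- n = 1
    subst h1
    have hset : {ω | c * ((1:ℕ) : ℝ) ^ β * Real.log ((1:ℕ):ℝ) / Lf ((1:ℕ):ℝ) ≤
        ((Set.range (S ω) ∩ Set.Iic 1).ncard : ℝ)} = Set.univ := by
      refine Set.eq_univ_of_forall fun ω => ?_
      simp only [Set.mem_setOf_eq, Nat.cast_one, Real.log_one, mul_zero, zero_div]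
      exact Nat.cast_nonneg _
    rw [hset, measure_univ, ENNReal.toReal_one, Nat.cast_one, Real.one_rpow]
  · -- n ≥ 2
    have hn2 : 2 ≤ n := h2
    have hn_pos : (0:ℝ) < n := by positivity
    have hn2R : (2:ℝ) ≤ (n:ℝ) := by exact_mod_cast hn2
    -- positivity of the tail at n
    obtain ⟨x₀, hx₀⟩ := Filter.eventually_atTop.1 hL.1
    set N₀ : ℕ := max n ⌈x₀⌉₊ with hN₀_def
    have hN₀n : n ≤ N₀ := le_max_left _ _
    have hN₀1 : 1 ≤ N₀ := le_trans hn hN₀n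
    have hx₀N : x₀ ≤ (N₀:ℝ) := by
      refine le_trans (Nat.le_ceil x₀) ?_
      exact_mod_cast (le_max_right n ⌈x₀⌉₊)
    have hLN₀ : 0 < Lf N₀ := hx₀ _ hx₀N
    have htN₀ : 0 < (P {ω | N₀ < ξ 0 ω}).toReal := by
      rw [htail N₀ hN₀1]
      have : (0:ℝ) < (N₀:ℝ) ^ (-β) := Real.rpow_pos_of_pos (by positivity) _
      positivity
    have ht0 : P {ω | n < ξ 0 ω} ≠ 0 := by
      intro h
      have hsub : {ω | N₀ < ξ 0 ω} ⊆ {ω | n < ξ 0 ω} := fun ω hω => by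
        simp only [Set.mem_setOf_eq] at *; omega
      have hmm2 : P {ω | N₀ < ξ 0 ω} ≤ P {ω | n < ξ 0 ω} := measure_mono hsub
      rw [h, le_zero_iff] at hmm2
      rw [hmm2] at htN₀
      simp at htN₀
    -- basic quantities
    set p := P {ω | 1 ≤ ξ 0 ω} with hp_def
    set t := P {ω | n < ξ 0 ω} with ht_def
    have hsub_tp : {ω | n < ξ 0 ω} ⊆ {ω | 1 ≤ ξ 0 ω} := fun ω hω => by
      simp only [Set.mem_setOf_eq] at *; omega
    have ht_le_p : t ≤ p := measure_mono hsub_tp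
    have hp_ne0 : p ≠ 0 := fun h => ht0 (le_antisymm (h ▸ ht_le_p) (zero_le))
    have hp_le1 : p ≤ 1 := prob_le_one
    have hp_netop : p ≠ ⊤ := ne_top_of_le_ne_top ENNReal.one_ne_top hp_le1
    have ht_le1 : t ≤ 1 := prob_le_one
    have ht_netop : t ≠ ⊤ := ne_top_of_le_ne_top hp_netop ht_le_p
    set T : ℝ := t.toReal with hT_def
    have hT_eq : T = (n:ℝ) ^ (-β) * Lf n := htail n hn
    have hT_pos : 0 < T := ENNReal.toReal_pos ht0 ht_netop
    have hT_le1 : T ≤ 1 := by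
      rw [hT_def, ← ENNReal.toReal_one]
      exact ENNReal.toReal_mono ENNReal.one_ne_top ht_le1
    set pR : ℝ := p.toReal with hpR_def
    have hpR_pos : 0 < pR := ENNReal.toReal_pos hp_ne0 hp_netop
    have hpR_le1 : pR ≤ 1 := by
      rw [hpR_def, ← ENNReal.toReal_one]
      exact ENNReal.toReal_mono ENNReal.one_ne_top hp_le1
    have hT_le_pR : T ≤ pR := ENNReal.toReal_mono hp_netop ht_le_p
    have hLf_pos : 0 < Lf n := by
      by_contra hcon
      push_neg at hcon
      have hrp : (0:ℝ) < (n:ℝ) ^ (-β) := Real.rpow_pos_of_pos hn_pos _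
      have hTle : T ≤ 0 := by
        rw [hT_eq]
        exact mul_nonpos_of_nonneg_of_nonpos hrp.le hcon
      linarith only [hT_pos, hTle]
    have hLf_ne : Lf (n:ℝ) ≠ 0 := ne_of_gt hLf_pos
    have hlog_pos : 0 < Real.log n := Real.log_pos (by exact_mod_cast h2)
    have hlog2 : Real.log 2 ≤ Real.log n := Real.log_le_log (by norm_num) hn2R
    -- the threshold
    set R : ℝ := c * (n:ℝ) ^ β * Real.log n / Lf n with hR_def
    have hnb : (n:ℝ) ^ β * (n:ℝ) ^ (-β) = 1 := by
      rw [← Real.rpow_add hn_pos, add_neg_cancel, Real.rpow_zero]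
    have hRT : R * T = c * Real.log n := by
      rw [hR_def, hT_eq]
      field_simp
      linear_combination hnb
    have hR_pos : 0 < R := by
      have h1 : (0:ℝ) < (n:ℝ) ^ β := Real.rpow_pos_of_pos hn_pos _
      have : (0:ℝ) < c := by linarith
      rw [hR_def]
      positivity
    have hR_gt1 : 1 < R :=
      stmt12_R_gt_one hc3 hlog2 hRT hT_pos hT_le1 hR_pos
    set m : ℕ := ⌈R⌉₊ - 1 with hm_def
    have hceil1 : 1 ≤ ⌈R⌉₊ := Nat.one_le_ceil_iff.2 hR_pos
    have hm1 : 1 ≤ m := by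
      have : 1 < ⌈R⌉₊ := by
        rw [Nat.lt_ceil]
        exact_mod_cast hR_gt1
      omega
    have hm_succ : m + 1 = ⌈R⌉₊ := by omega
    have hm_ge : R - 1 ≤ (m:ℝ) := by
      have h1 : R ≤ (⌈R⌉₊ : ℝ) := Nat.le_ceil R
      have h2' : (m:ℝ) = (⌈R⌉₊:ℝ) - 1 := by
        rw [hm_def]
        push_cast [Nat.cast_sub hceil1]
        ring
      linarith only [h1, h2']
    -- event inclusion
    have hrange : ∀ ω, Set.range (S ω) = Set.range (sPart (fun k => ξ k ω)) := by
      intro ω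
      have hfun : S ω = sPart (fun k => ξ k ω) := funext fun N => hS ω N
      rw [hfun]
    have hincl : {ω | c * (n : ℝ) ^ β * Real.log n / Lf n ≤
          ((Set.range (S ω) ∩ Set.Iic n).ncard : ℝ)} ⊆
        {ω | m + 1 ≤ (Set.range (sPart (fun k => ξ k ω)) ∩ Set.Iic n).ncard} := by
      intro ω hω
      simp only [Set.mem_setOf_eq] at *
      rw [← hrange ω]
      rw [hm_succ]
      exact Nat.ceil_le.2 hω
    have hbound := main_bound P ξ hmeas hindep hident n m hn hm1 ht0
    have hchain := le_trans (measure_mono hincl) hbound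
    -- convert to real
    have hD_le2p : (p - t) + p ≤ 2 * p := by
      rw [two_mul]
      exact add_le_add_left tsub_le_self p
    have hratio_le1 : ((p - t) + p) / (2 * p) ≤ 1 :=
      ENNReal.div_le_of_le_mul (by rwa [one_mul])
    have hfin : (((p - t) + p) / (2 * p)) ^ m ≠ ⊤ :=
      ne_top_of_le_ne_top ENNReal.one_ne_top (pow_le_one₀ (zero_le) hratio_le1)
    have hreal := ENNReal.toReal_mono hfin hchain
    rw [ENNReal.toReal_pow, ENNReal.toReal_div] at hreal
    have hDtoReal : ((p - t) + p).toReal = (pR - T) + pR := by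
      rw [ENNReal.toReal_add (by
          exact ne_top_of_le_ne_top hp_netop tsub_le_self) hp_netop,
        ENNReal.toReal_sub_of_le ht_le_p hp_netop]
    have h2ptoReal : (2 * p).toReal = 2 * pR := by
      rw [ENNReal.toReal_mul]
      norm_num
      rfl
    rw [hDtoReal, h2ptoReal] at hreal
    exact le_trans hreal (stmt12_real_tail_bound n hn2 C c T pR R m hC hc3 hcC
      hT_pos hT_le1 hpR_pos hpR_le1 hT_le_pR hRT hm_ge)
end

section
/- Under the same random walk assumptions (steps with regularly varying tail of index −β ∈ (−1,0), S_0 = 0, range A), almost surely: limsup over n_0 → ∞ of sup_{n > n_0} max_{0 ≤ k ≤ n−1} max_{m ∈ ℤ} #(A ∩ [m, m+2^k) ∩ [2^{n_0}, 2^n)) / (n 2^{βk}/L(2^k)) is finite. That is, uniformly over dyadic windows at all scales, the range occupies at most of order n 2^{βk}/L(2^k) points in any interval of length 2^k inside [2^{n_0}, 2^n). -/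
open Filter MeasureTheory ProbabilityTheory

set_option linter.unusedSectionVars false
open scoped ENNReal
set_option linter.unusedSectionVars false
namespace Stmt13Aux

variable {Ω : Type*} [MeasurableSpace Ω]

def W (ξ : ℕ → Ω → ℕ) (t : ℕ) (ω : Ω) : ℕ := ∑ i ∈ Finset.range t, ξ i ω

def Ev (ξ : ℕ → Ω → ℕ) : ℕ → ℕ → ℕ → Set Ω
  | 0, _, _ => Set.univ
  | (r+1), t, b =>
      ⋃ (d : ℕ), ⋃ (v ∈ Finset.Ico 1 b),
        (((⋂ i ∈ Finset.range d, {ω | ξ (t+i) ω = 0}) ∩ {ω | ξ (t+d) ω = v}) ∩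
          Ev ξ r (t+d+1) (b-v))

def past (ξ : ℕ → Ω → ℕ) (T : ℕ) : MeasurableSpace Ω :=
  ⨆ i ∈ Set.Iio T, MeasurableSpace.comap (ξ i) inferInstance
def fut (ξ : ℕ → Ω → ℕ) (T : ℕ) : MeasurableSpace Ω :=
  ⨆ i ∈ Set.Ici T, MeasurableSpace.comap (ξ i) inferInstance

variable {ξ : ℕ → Ω → ℕ}

lemma measNat (s : Set ℕ) : MeasurableSet s := MeasurableSpace.measurableSet_top
lemma comap_meas (j : ℕ) (s : Set ℕ) :
    MeasurableSet[MeasurableSpace.comap (ξ j) inferInstance] (ξ j ⁻¹' s) := ⟨s, measNat s, rfl⟩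
lemma comap_le_past {j T : ℕ} (h : j < T) :
    MeasurableSpace.comap (ξ j) inferInstance ≤ past ξ T :=
  le_iSup₂ (f := fun i (_ : i ∈ Set.Iio T) => MeasurableSpace.comap (ξ i) inferInstance) j h
lemma comap_le_fut {j T : ℕ} (h : T ≤ j) :
    MeasurableSpace.comap (ξ j) inferInstance ≤ fut ξ T :=
  le_iSup₂ (f := fun i (_ : i ∈ Set.Ici T) => MeasurableSpace.comap (ξ i) inferInstance) j h
lemma fut_mono {T T' : ℕ} (h : T ≤ T') : fut ξ T' ≤ fut ξ T := by
  refine iSup₂_le fun i hi => ?_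
  exact le_iSup₂ (f := fun i (_ : i ∈ Set.Ici T) => MeasurableSpace.comap (ξ i) inferInstance) i
    (le_trans h hi)
lemma meas_past_pre {j T : ℕ} (h : j < T) (s : Set ℕ) :
    MeasurableSet[past ξ T] (ξ j ⁻¹' s) := comap_le_past h _ (comap_meas j s)
lemma meas_fut_pre {j T : ℕ} (h : T ≤ j) (s : Set ℕ) :
    MeasurableSet[fut ξ T] (ξ j ⁻¹' s) := comap_le_fut h _ (comap_meas j s)

lemma W_meas_past (T : ℕ) : Measurable[past ξ T] (W ξ T) := by
  unfold W
  apply Finset.measurable_sum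
  intro i hi
  have h1 : Measurable[MeasurableSpace.comap (ξ i) inferInstance] (ξ i) :=
    measurable_iff_comap_le.mpr le_rfl
  exact h1.mono (comap_le_past (Finset.mem_range.mp hi)) le_rfl

lemma Ev_meas_fut : ∀ (r t b : ℕ), MeasurableSet[fut ξ t] (Ev ξ r t b) := by
  intro r
  induction r with
  | zero => intro t b; exact MeasurableSet.univ
  | succ r ih =>
    intro t b
    refine MeasurableSet.iUnion fun d => ?_
    refine MeasurableSet.biUnion (Finset.Ico 1 b).countable_toSet fun v _ => ?_
    refine MeasurableSet.inter (MeasurableSet.inter ?_ ?_) ?_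
    · refine MeasurableSet.biInter (Finset.range d).countable_toSet fun i _ => ?_
      exact meas_fut_pre (by omega) {0}
    · exact meas_fut_pre (by omega) {v}
    · exact fut_mono (by omega) _ (ih (t+d+1) (b-v))

variable {P : Measure Ω} [IsProbabilityMeasure P]

lemma split (hmeas : ∀ k, Measurable (ξ k))
    (hindep : iIndepFun ξ P) (T : ℕ) {A B : Set Ω}
    (hA : MeasurableSet[past ξ T] A) (hB : MeasurableSet[fut ξ T] B) :
    P (A ∩ B) = P A * P B := by
  have h := ProbabilityTheory.indep_biSup_compl
    (s := fun i => MeasurableSpace.comap (ξ i) inferInstance)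
    (fun i => (hmeas i).comap_le) hindep (Set.Iio T)
  rw [Indep_iff] at h
  refine h A B hA ?_
  rw [Set.compl_Iio]
  exact hB

variable (hmeas : ∀ k, Measurable (ξ k))
  (hindep : iIndepFun ξ P)
  (hident : ∀ k, IdentDistrib (ξ k) (ξ 0) P P)

include hmeas hindep hident

lemma measure_zeros (t : ℕ) : ∀ d : ℕ,
    P (⋂ i ∈ Finset.range d, {ω | ξ (t+i) ω = 0}) = P (ξ 0 ⁻¹' {0}) ^ d := by
  intro d
  induction d with
  | zero => simp
  | succ d ih =>
    have hre : (⋂ i ∈ Finset.range (d+1), {ω | ξ (t+i) ω = 0}) =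
        (⋂ i ∈ Finset.range d, {ω | ξ (t+i) ω = 0}) ∩ (ξ (t+d) ⁻¹' {0}) := by
      rw [Finset.range_add_one, Finset.set_biInter_insert, Set.inter_comm]
      rfl
    rw [hre, split hmeas hindep (t+d)]
    · rw [ih, (hident (t+d)).measure_mem_eq (measNat {0}), pow_succ]
    · refine MeasurableSet.biInter (Finset.range d).countable_toSet fun i hi => ?_
      have hid := Finset.mem_range.mp hi
      exact meas_past_pre (by omega) {0}
    · exact meas_fut_pre le_rfl {0}

lemma Ev_bound (hp0 : P (ξ 0 ⁻¹' Set.Ici 1) ≠ 0) :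
    ∀ (r t b : ℕ), P (Ev ξ r t b) ≤ (1 - P (ξ 0 ⁻¹' Set.Ici b)) ^ r := by
  intro r
  induction r with
  | zero => intro t b; simp [Ev]
  | succ r ih =>
    intro t b
    set p : ℝ≥0∞ := P (ξ 0 ⁻¹' Set.Ici 1) with hp
    set q : ℝ≥0∞ := P (ξ 0 ⁻¹' Set.Ici b) with hq
    have hple : p ≤ 1 := prob_le_one
    have hqle : q ≤ 1 := prob_le_one
    have key : ∀ d : ℕ, ∀ v ∈ Finset.Ico 1 b,
        P ((((⋂ i ∈ Finset.range d, {ω | ξ (t+i) ω = 0}) ∩ {ω | ξ (t+d) ω = v}) ∩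
          Ev ξ r (t+d+1) (b-v))) ≤
        P (ξ 0 ⁻¹' {0}) ^ d * P (ξ 0 ⁻¹' {v}) * (1 - q) ^ r := by
      intro d v hv
      have h1 : P ((((⋂ i ∈ Finset.range d, {ω | ξ (t+i) ω = 0}) ∩ {ω | ξ (t+d) ω = v}) ∩
          Ev ξ r (t+d+1) (b-v))) =
          P ((⋂ i ∈ Finset.range d, {ω | ξ (t+i) ω = 0}) ∩ {ω | ξ (t+d) ω = v}) *
          P (Ev ξ r (t+d+1) (b-v)) := by
        refine split hmeas hindep (t+d+1) ?_ ?_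
        · refine MeasurableSet.inter ?_ ?_
          · refine MeasurableSet.biInter (Finset.range d).countable_toSet fun i hi => ?_
            have hid := Finset.mem_range.mp hi
            exact meas_past_pre (by omega) {0}
          · exact meas_past_pre (by omega) {v}
        · exact Ev_meas_fut r (t+d+1) (b-v)
      have h2 : P ((⋂ i ∈ Finset.range d, {ω | ξ (t+i) ω = 0}) ∩ {ω | ξ (t+d) ω = v}) =
          P (ξ 0 ⁻¹' {0}) ^ d * P (ξ 0 ⁻¹' {v}) := by
        have hpre : {ω | ξ (t+d) ω = v} = ξ (t+d) ⁻¹' {v} := rfl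
        rw [hpre, split hmeas hindep (t+d) ?_ (meas_fut_pre le_rfl {v}),
          measure_zeros hmeas hindep hident t d, (hident (t+d)).measure_mem_eq (measNat {v})]
        refine MeasurableSet.biInter (Finset.range d).countable_toSet fun i hi => ?_
        have hid := Finset.mem_range.mp hi
        exact meas_past_pre (by omega) {0}
      have h3 : P (Ev ξ r (t+d+1) (b-v)) ≤ (1 - q) ^ r := by
        refine le_trans (ih (t+d+1) (b-v)) ?_
        refine pow_le_pow_left' ?_ r
        refine tsub_le_tsub_left ?_ 1
        exact measure_mono (Set.preimage_mono (Set.Ici_subset_Ici.mpr (by omega)))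
      calc P _ = _ := h1
        _ ≤ P (ξ 0 ⁻¹' {0}) ^ d * P (ξ 0 ⁻¹' {v}) * (1-q)^r := by
            rw [h2]; exact mul_le_mul_right h3 _
    rcases Nat.eq_zero_or_pos b with hb | hb
    · subst hb
      have : Ev ξ (r+1) t 0 = ∅ := by
        show (⋃ (d : ℕ), ⋃ (v ∈ Finset.Ico 1 0), _) = ∅
        simp
      rw [this]; simp
    -- abbreviations
    set p0 : ℝ≥0∞ := P (ξ 0 ⁻¹' {0}) with hp0def
    set K : ℝ≥0∞ := (1 - q) ^ r with hKdef
    have hstep1 : P (Ev ξ (r+1) t b) ≤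
        ∑' d : ℕ, ∑ v ∈ Finset.Ico 1 b, p0 ^ d * P (ξ 0 ⁻¹' {v}) * K := by
      refine le_trans (measure_iUnion_le _) ?_
      refine ENNReal.tsum_le_tsum fun d => ?_
      refine le_trans (measure_biUnion_finset_le _ _) ?_
      exact Finset.sum_le_sum fun v hv => key d v hv
    have hsumv : ∑ v ∈ Finset.Ico 1 b, P (ξ 0 ⁻¹' {v}) = p - q := by
      have hdisj : Set.PairwiseDisjoint (↑(Finset.Ico 1 b)) (fun v => ξ 0 ⁻¹' {v}) := by
        intro x _ y _ hxy
        refine Set.disjoint_left.mpr fun ω hx hy => ?_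
        simp only [Set.mem_preimage, Set.mem_singleton_iff] at hx hy
        exact hxy (hx ▸ hy ▸ rfl)
      rw [← measure_biUnion_finset hdisj fun v _ => (hmeas 0) (measNat _)]
      have hUeq : (⋃ v ∈ Finset.Ico 1 b, ξ 0 ⁻¹' {v}) =
          ξ 0 ⁻¹' Set.Ici 1 \ ξ 0 ⁻¹' Set.Ici b := by
        ext ω
        simp only [Set.mem_iUnion, Set.mem_preimage, Set.mem_singleton_iff, Finset.mem_Ico,
          Set.mem_diff, Set.mem_Ici]
        constructor
        · rintro ⟨v, ⟨h1v, hvb⟩, hv⟩; omega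
        · rintro ⟨h1, h2⟩; exact ⟨ξ 0 ω, ⟨h1, by omega⟩, rfl⟩
      rw [hUeq, measure_diff ?_ ?_ (measure_ne_top P _)]
      · exact Set.preimage_mono fun x hx => Set.mem_Ici.mpr (le_trans hb hx)
      · exact ((hmeas 0) (measNat _)).nullMeasurableSet
    have h1mp0 : (1 : ℝ≥0∞) - p0 = p := by
      have hcompl : (ξ 0 ⁻¹' ({0} : Set ℕ)) = (ξ 0 ⁻¹' Set.Ici 1)ᶜ := by
        ext ω
        simp only [Set.mem_preimage, Set.mem_singleton_iff, Set.mem_compl_iff, Set.mem_Ici]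
        omega
      rw [hp0def, hcompl, prob_compl_eq_one_sub ((hmeas 0) (measNat _)),
        ENNReal.sub_sub_cancel ENNReal.one_ne_top hple]
    have hcalc : ∑' d : ℕ, ∑ v ∈ Finset.Ico 1 b, p0 ^ d * P (ξ 0 ⁻¹' {v}) * K
        = p⁻¹ * ((p - q) * K) := by
      have hper : ∀ d : ℕ, ∑ v ∈ Finset.Ico 1 b, p0 ^ d * P (ξ 0 ⁻¹' {v}) * K
          = p0 ^ d * ((p - q) * K) := by
        intro d
        rw [← hsumv, Finset.sum_mul, Finset.mul_sum]
        refine Finset.sum_congr rfl fun v _ => by ring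
      simp_rw [hper]
      rw [ENNReal.tsum_mul_right, ENNReal.tsum_geometric, h1mp0]
    have hfinal : p⁻¹ * ((p - q) * K) ≤ (1 - q) ^ (r + 1) := by
      have h4 : p - q ≤ p * (1 - q) := by
        have h5 : p * (1 - q) = p - p * q := by
          rw [ENNReal.mul_sub fun _ _ => measure_ne_top P _, mul_one]
        rw [h5]
        exact tsub_le_tsub_left (mul_le_of_le_one_left' hple) p
      calc p⁻¹ * ((p - q) * K) = (p⁻¹ * (p - q)) * K := by ring
        _ ≤ (p⁻¹ * (p * (1 - q))) * K := by
            exact mul_le_mul_left (mul_le_mul_right h4 _) K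
        _ = ((p⁻¹ * p) * (1 - q)) * K := by ring
        _ = (1 - q) * K := by
            rw [ENNReal.inv_mul_cancel hp0 (measure_ne_top P _), one_mul]
        _ = (1 - q) ^ (r + 1) := by rw [hKdef, pow_succ, mul_comm]
    exact le_trans hstep1 (le_of_eq hcalc |>.trans hfinal)



omit hmeas hindep hident

lemma W_mono (ω : Ω) {t t' : ℕ} (h : t ≤ t') : W ξ t ω ≤ W ξ t' ω :=
  Finset.sum_le_sum_of_subset (Finset.range_subset_range.mpr h)

lemma W_succ (ω : Ω) (t : ℕ) : W ξ (t+1) ω = W ξ t ω + ξ t ω :=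
  Finset.sum_range_succ (fun i => ξ i ω) t

lemma W_add (ω : Ω) (t : ℕ) : ∀ d : ℕ, W ξ (t+d) ω = W ξ t ω + ∑ i ∈ Finset.range d, ξ (t+i) ω := by
  intro d
  induction d with
  | zero => simp [W]
  | succ d ih =>
    rw [show t+(d+1) = (t+d)+1 from rfl, W_succ, ih, Finset.sum_range_succ]
    ring

include hmeas in
lemma tsum_A_le (N : ℕ) :
    ∑' t : ℕ, P ({ω | 1 ≤ ξ t ω} ∩ {ω | W ξ (t+1) ω < N}) ≤ (N : ℝ≥0∞) := by
  classical
  set A : ℕ → Set Ω := fun t => {ω | 1 ≤ ξ t ω} ∩ {ω | W ξ (t+1) ω < N} with hA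
  have hAmeas : ∀ t, MeasurableSet (A t) := by
    intro t
    refine MeasurableSet.inter ((hmeas t) (measNat _)) ?_
    have hWm : Measurable (W ξ (t+1)) := by
      exact Finset.measurable_sum (Finset.range (t+1)) fun i _ => hmeas i
    exact hWm (measNat (Set.Iio N))
  have hpt : ∀ ω, ∑' t : ℕ, (A t).indicator (1 : Ω → ℝ≥0∞) ω ≤ (N : ℝ≥0∞) := by
    intro ω
    rw [ENNReal.tsum_eq_iSup_sum]
    refine iSup_le fun s => ?_
    set G := s.filter (fun t => ω ∈ A t) with hG
    have hcard : ∀ x ∈ G, x ∈ G → True := fun _ _ _ => trivial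
    have hsum : ∑ t ∈ s, (A t).indicator (1 : Ω → ℝ≥0∞) ω = (G.card : ℝ≥0∞) := by
      rw [Finset.card_filter]
      push_cast
      refine Finset.sum_congr rfl fun t _ => ?_
      by_cases h : ω ∈ A t <;> simp [Set.indicator_apply, h]
    rw [hsum]
    have hcardle : G.card ≤ N := by
      rcases G.eq_empty_or_nonempty with h | h
      · simp [h]
      · set T := G.max' h with hT
        have hTA : ω ∈ A T := (Finset.mem_filter.mp (G.max'_mem h)).2
        have h1 : G.card ≤ ∑ i ∈ G, ξ i ω := by
          calc G.card = ∑ _i ∈ G, 1 := by simp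
            _ ≤ ∑ i ∈ G, ξ i ω := by
                refine Finset.sum_le_sum fun i hi => ?_
                exact (Finset.mem_filter.mp hi).2.1
        have h2 : ∑ i ∈ G, ξ i ω ≤ W ξ (T+1) ω := by
          refine Finset.sum_le_sum_of_subset fun i hi => ?_
          exact Finset.mem_range.mpr (Nat.lt_succ_of_le (G.le_max' i hi))
        have h3 : W ξ (T+1) ω < N := hTA.2
        omega
    exact_mod_cast hcardle
  calc ∑' t : ℕ, P (A t) = ∑' t : ℕ, ∫⁻ ω, (A t).indicator (1 : Ω → ℝ≥0∞) ω ∂P := by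
        refine tsum_congr fun t => ?_
        rw [lintegral_indicator_one (hAmeas t)]
    _ = ∫⁻ ω, (∑' t : ℕ, (A t).indicator (1 : Ω → ℝ≥0∞) ω) ∂P := by
        rw [← lintegral_tsum fun t => ((measurable_one).indicator (hAmeas t)).aemeasurable]
    _ ≤ ∫⁻ _ω, (N : ℝ≥0∞) ∂P := lintegral_mono hpt
    _ = N := by simp

lemma lemB (ω : Ω) : ∀ (r : ℕ) (t b : ℕ) (V : Finset ℕ), V.card = r →
    (∀ x ∈ V, (∃ j, W ξ j ω = x) ∧ W ξ t ω < x ∧ x < W ξ t ω + b) → ω ∈ Ev ξ r t b := by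
  intro r
  induction r with
  | zero => intro t b V _ _; exact Set.mem_univ ω
  | succ r ih =>
    intro t b V hcard hmem
    have hne : V.Nonempty := Finset.card_pos.mp (by omega)
    set v₁ := V.min' hne with hv₁
    obtain ⟨⟨j, hj⟩, hlt, hub⟩ := hmem v₁ (V.min'_mem hne)
    have hex : ∃ d, 1 ≤ ξ (t+d) ω := by
      by_contra hno
      push_neg at hno
      have hWle : W ξ j ω ≤ W ξ t ω := by
        rcases le_or_gt j t with h | h
        · exact W_mono ω h
        · have hj' : j = t + (j - t) := by omega
          rw [hj', W_add, Finset.sum_eq_zero fun i _ => by have := hno i; omega]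
          omega
      omega
    set d := Nat.find hex with hd
    have hdpos : 1 ≤ ξ (t+d) ω := Nat.find_spec hex
    have hzero : ∀ i, i < d → ξ (t+i) ω = 0 := fun i hi => by
      have := Nat.find_min hex hi; omega
    set v := ξ (t+d) ω with hv
    have hWtd : W ξ (t+d) ω = W ξ t ω := by
      rw [W_add, Finset.sum_eq_zero fun i hi => hzero i (Finset.mem_range.mp hi)]
      omega
    have hWtd1 : W ξ (t+d+1) ω = W ξ t ω + v := by
      rw [show t+d+1 = (t+d)+1 from rfl, W_succ, hWtd]
    have hjge : t+d+1 ≤ j := by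
      by_contra h
      push_neg at h
      have := W_mono (ξ := ξ) ω (show j ≤ t+d by omega)
      omega
    have hle : W ξ t ω + v ≤ v₁ := by
      rw [← hWtd1, ← hj]
      exact W_mono ω hjge
    have hvb : v < b := by omega
    have hIH : ω ∈ Ev ξ r (t+d+1) (b-v) := by
      by_cases hc : W ξ (t+d+1) ω = v₁
      · refine ih (t+d+1) (b-v) (V.erase v₁) ?_ ?_
        · rw [Finset.card_erase_of_mem (V.min'_mem hne)]; omega
        · intro x hx
          rw [Finset.mem_erase] at hx
          obtain ⟨hr2, h2, h3⟩ := hmem x hx.2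
          have hminle := V.min'_le x hx.2
          have hxne := hx.1
          refine ⟨hr2, by omega, by omega⟩
      · refine ih (t+d+1) (b-v) (V.erase (V.max' hne)) ?_ ?_
        · rw [Finset.card_erase_of_mem (V.max'_mem hne)]; omega
        · intro x hx
          rw [Finset.mem_erase] at hx
          obtain ⟨hr2, h2, h3⟩ := hmem x hx.2
          have hminle := V.min'_le x hx.2
          have hlt' : W ξ (t+d+1) ω < v₁ := by omega
          refine ⟨hr2, by omega, by omega⟩
    show ω ∈ ⋃ (d' : ℕ), ⋃ (v' ∈ Finset.Ico 1 b),
        (((⋂ i ∈ Finset.range d', {ω | ξ (t+i) ω = 0}) ∩ {ω | ξ (t+d') ω = v'}) ∩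
          Ev ξ r (t+d'+1) (b-v'))
    refine Set.mem_iUnion.mpr ⟨d, ?_⟩
    refine Set.mem_iUnion₂.mpr ⟨v, Finset.mem_Ico.mpr ⟨hdpos, hvb⟩, ?_⟩
    refine ⟨⟨?_, rfl⟩, hIH⟩
    exact Set.mem_iInter₂.mpr fun i hi => hzero i (Finset.mem_range.mp hi)
end Stmt13Aux

open Stmt13Aux

/-- For the same random walk (i.i.d. `ℕ`-valued steps with regularly varying
tail of index `-β`, `S₀ = 0`, range `A`), almost surely there are `C` and `n₀` such that for
all `n > n₀`, all scales `k < n` and all windows `[m, m + 2^k)`,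
`#(A ∩ [m, m+2^k) ∩ [2^{n₀}, 2^n)) ≤ C n 2^{βk} / L(2^k)`; i.e. the limsup over `n₀ → ∞`
of the normalized dyadic-window occupation counts is a.s. finite. -/
theorem stmt13 {Ω : Type*} [MeasurableSpace Ω] (P : Measure Ω) [IsProbabilityMeasure P]
    (β : ℝ) (hβ1 : 0 < β) (hβ2 : β < 1)
    (ξ : ℕ → Ω → ℕ) (Lf : ℝ → ℝ) (hL : SlowlyVarying Lf)
    (hmeas : ∀ k, Measurable (ξ k))
    (hindep : iIndepFun ξ P)
    (hident : ∀ k, IdentDistrib (ξ k) (ξ 0) P P)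
    (htail : ∀ n : ℕ, 1 ≤ n →
      (P {ω | n < ξ 0 ω}).toReal = (n : ℝ) ^ (-β) * Lf n)
    (S : Ω → ℕ → ℕ) (hS : ∀ ω n, S ω n = ∑ k ∈ Finset.range n, ξ k ω) :
    ∀ᵐ ω ∂P, ∃ C : ℝ, ∃ n₀ : ℕ, ∀ n : ℕ, n₀ < n → ∀ k : ℕ, k < n → ∀ m : ℤ,
      (({x : ℕ | x ∈ Set.range (S ω) ∧ m ≤ (x : ℤ) ∧ (x : ℤ) < m + 2 ^ k ∧
          2 ^ n₀ ≤ x ∧ x < 2 ^ n}).ncard : ℝ) ≤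
        C * n * (2 : ℝ) ^ (β * k) / Lf ((2 : ℝ) ^ k) := by
  classical
  obtain ⟨a, ha⟩ := eventually_atTop.mp hL.1
  -- tails are positive
  have hpos : ∀ b : ℕ, P {ω | b < ξ 0 ω} ≠ 0 := by
    intro b
    obtain ⟨Na, hNa⟩ := exists_nat_ge (max a 1)
    set N := max Na (b+1) with hNdef
    have hN1 : 1 ≤ N := by omega
    have haN : a ≤ (N : ℝ) := by
      calc a ≤ max a 1 := le_max_left _ _
        _ ≤ (Na : ℝ) := hNa
        _ ≤ (N : ℝ) := by exact_mod_cast Nat.cast_le.mpr (le_max_left _ _)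
    have hLN : 0 < Lf N := ha N haN
    have htN := htail N hN1
    have hPN : P {ω | N < ξ 0 ω} ≠ 0 := by
      intro h0
      rw [h0] at htN
      simp only [ENNReal.toReal_zero] at htN
      have hrp : (0:ℝ) < (N : ℝ) ^ (-β) :=
        Real.rpow_pos_of_pos (by exact_mod_cast hN1) _
      nlinarith
    intro h0
    apply hPN
    refine measure_mono_null ?_ h0
    intro ω hω
    simp only [Set.mem_setOf_eq] at *
    omega
  have hp0 : P (ξ 0 ⁻¹' Set.Ici 1) ≠ 0 := by
    intro h0
    apply hpos 0
    refine measure_mono_null ?_ h0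
    intro ω hω
    simp only [Set.mem_setOf_eq] at hω
    simp only [Set.mem_preimage, Set.mem_Ici]; omega
  -- parameters
  set q : ℕ → ℝ≥0∞ := fun k => P (ξ 0 ⁻¹' Set.Ici (2^k)) with hqdef
  have hqpos : ∀ k, q k ≠ 0 := by
    intro k h0
    apply hpos (2^k)
    refine measure_mono_null ?_ h0
    intro ω hω
    simp only [Set.mem_setOf_eq] at hω
    simp only [Set.mem_preimage, Set.mem_Ici]
    omega
  have hqtop : ∀ k, q k ≠ ∞ := fun k => measure_ne_top P _
  set qr : ℕ → ℝ := fun k => (q k).toReal with hqrdef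
  have hqrpos : ∀ k, 0 < qr k := fun k => ENNReal.toReal_pos (hqpos k) (hqtop k)
  have hqrle1 : ∀ k, qr k ≤ 1 := by
    intro k
    rw [show (1:ℝ) = (1:ℝ≥0∞).toReal by simp]
    exact ENNReal.toReal_mono ENNReal.one_ne_top prob_le_one
  set mk : ℕ → ℕ := fun k => ⌈(3:ℝ) / qr k⌉₊ with hmkdef
  -- exponential bound
  have h8 : ∀ k, (1 - q k) ^ (mk k) ≤ ENNReal.ofReal (Real.exp (-3)) := by
    intro k
    have hq1 : (1:ℝ≥0∞) - q k = ENNReal.ofReal (1 - qr k) := by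
      rw [ENNReal.ofReal_sub _ (le_of_lt (hqrpos k)), ENNReal.ofReal_one,
        ENNReal.ofReal_toReal (hqtop k)]
    rw [hq1, ← ENNReal.ofReal_pow (by linarith [hqrle1 k])]
    refine ENNReal.ofReal_le_ofReal ?_
    calc (1 - qr k) ^ (mk k) ≤ (Real.exp (-qr k)) ^ (mk k) := by
          refine pow_le_pow_left₀ (by linarith [hqrle1 k]) ?_ _
          have := Real.add_one_le_exp (-qr k)
          linarith
      _ = Real.exp ((mk k : ℝ) * (-qr k)) := by rw [Real.exp_nat_mul]
      _ ≤ Real.exp (-3) := by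
          refine Real.exp_le_exp.mpr ?_
          have h3 : (3:ℝ) / qr k ≤ (mk k : ℝ) := Nat.le_ceil _
          have h4 := (div_le_iff₀ (hqrpos k)).mp h3
          nlinarith
  have hexp8 : ENNReal.ofReal (Real.exp (-3)) ≤ (8:ℝ≥0∞)⁻¹ := by
    have h83 : (8:ℝ) ≤ Real.exp 3 := by
      calc (8:ℝ) = 2^(3:ℕ) := by norm_num
        _ ≤ (Real.exp 1)^(3:ℕ) := by
            refine pow_le_pow_left₀ (by norm_num) ?_ _
            have := Real.add_one_le_exp 1
            linarith
        _ = Real.exp ((3:ℕ) * 1) := by rw [Real.exp_nat_mul]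
        _ = Real.exp 3 := by norm_num
    have hle : Real.exp (-3) ≤ (8:ℝ)⁻¹ := by
      rw [Real.exp_neg]
      refine inv_anti₀ (by norm_num) h83
    refine le_trans (ENNReal.ofReal_le_ofReal hle) ?_
    rw [ENNReal.ofReal_inv_of_pos (by norm_num)]
    simp
  -- the bad events
  set bad : ℕ → Set Ω := fun n => ⋃ k ∈ Finset.range n, ⋃ (t : ℕ),
      (({ω | 1 ≤ ξ t ω} ∩ {ω | W ξ (t+1) ω < 2^n}) ∩ Ev ξ (n * mk k + 1) (t+1) (2^k)) with hbad
  have hbadP : ∀ n, P (bad n) ≤ (n : ℝ≥0∞) * (2^n * (8:ℝ≥0∞)⁻¹^n) := by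
    intro n
    refine le_trans (measure_biUnion_finset_le _ _) ?_
    have hterm : ∀ k ∈ Finset.range n,
        P (⋃ (t : ℕ), (({ω | 1 ≤ ξ t ω} ∩ {ω | W ξ (t+1) ω < 2^n}) ∩
          Ev ξ (n * mk k + 1) (t+1) (2^k))) ≤ 2^n * (8:ℝ≥0∞)⁻¹^n := by
      intro k _
      refine le_trans (measure_iUnion_le _) ?_
      have hsplit : ∀ t : ℕ,
          P ((({ω | 1 ≤ ξ t ω} ∩ {ω | W ξ (t+1) ω < 2^n}) ∩ Ev ξ (n * mk k + 1) (t+1) (2^k)))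
          ≤ P ({ω | 1 ≤ ξ t ω} ∩ {ω | W ξ (t+1) ω < 2^n}) * (8:ℝ≥0∞)⁻¹^n := by
        intro t
        have hpast : MeasurableSet[past ξ (t+1)] ({ω | 1 ≤ ξ t ω} ∩ {ω | W ξ (t+1) ω < 2^n}) := by
          refine MeasurableSet.inter ?_ ?_
          · exact meas_past_pre (Nat.lt_succ_self t) (Set.Ici 1)
          · exact (W_meas_past (t+1)) (measNat (Set.Iio (2^n)))
        rw [split hmeas hindep (t+1) hpast (Ev_meas_fut _ _ _)]
        refine mul_le_mul_right ?_ _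
        calc P (Ev ξ (n * mk k + 1) (t+1) (2^k))
            ≤ (1 - q k) ^ (n * mk k + 1) := Ev_bound hmeas hindep hident hp0 _ _ _
          _ ≤ (1 - q k) ^ (n * mk k) := by
              rw [pow_succ]
              exact mul_le_of_le_one_right' (tsub_le_self.trans le_rfl)
          _ = ((1 - q k) ^ (mk k)) ^ n := by rw [← pow_mul, Nat.mul_comm]
          _ ≤ (8:ℝ≥0∞)⁻¹ ^ n := pow_le_pow_left' ((h8 k).trans hexp8) n
      refine le_trans (ENNReal.tsum_le_tsum hsplit) ?_
      rw [ENNReal.tsum_mul_right]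
      refine mul_le_mul_left ?_ _
      refine le_trans (tsum_A_le (P := P) hmeas (2^n)) (le_of_eq ?_)
      push_cast
      ring
    refine le_trans (Finset.sum_le_sum hterm) ?_
    rw [Finset.sum_const, Finset.card_range, nsmul_eq_mul]
  have hsum : ∑' n, P (bad n) ≠ ∞ := by
    have hpt : ∀ n : ℕ, (n : ℝ≥0∞) * (2^n * (8:ℝ≥0∞)⁻¹^n) ≤ (2:ℝ≥0∞)⁻¹^n := by
      intro n
      have hn2 : (n : ℝ≥0∞) ≤ 2^n := by
        have : n < 2 ^ n := Nat.lt_two_pow_self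
        calc (n : ℝ≥0∞) ≤ ((2^n : ℕ) : ℝ≥0∞) := by exact_mod_cast Nat.cast_le.mpr this.le
          _ = 2^n := by push_cast; ring
      calc (n : ℝ≥0∞) * (2^n * (8:ℝ≥0∞)⁻¹^n) ≤ 2^n * (2^n * (8:ℝ≥0∞)⁻¹^n) :=
            mul_le_mul_left hn2 _
        _ = (2 * (2 * 8⁻¹))^n := by rw [mul_pow, mul_pow]
        _ = (2:ℝ≥0∞)⁻¹^n := by
            congr 1
            have h8e : (8:ℝ≥0∞) = 2 * 2 * 2 := by norm_num
            rw [h8e, ENNReal.mul_inv (by norm_num) (by norm_num),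
              ENNReal.mul_inv (by norm_num) (by norm_num)]
            rw [show ((2:ℝ≥0∞) * (2 * (2⁻¹ * 2⁻¹ * 2⁻¹))) = (2 * 2⁻¹) * ((2 * 2⁻¹) * 2⁻¹) by ring]
            rw [ENNReal.mul_inv_cancel (by norm_num) (by norm_num)]
            ring
    refine ne_top_of_le_ne_top ?_ (ENNReal.tsum_le_tsum (fun n => (hbadP n).trans (hpt n)))
    rw [ENNReal.tsum_geometric]
    refine ENNReal.inv_ne_top.mpr ?_
    refine ne_of_gt ?_
    rw [tsub_pos_iff_lt]
    norm_num
  -- Borel–Cantelli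
  have hae := MeasureTheory.ae_eventually_notMem hsum
  filter_upwards [hae] with ω hω
  obtain ⟨N, hN⟩ := eventually_atTop.mp hω
  refine ⟨5, N, fun n hn k hk m => ?_⟩
  set X := {x : ℕ | x ∈ Set.range (S ω) ∧ m ≤ (x : ℤ) ∧ (x : ℤ) < m + 2 ^ k ∧
      2 ^ N ≤ x ∧ x < 2 ^ n} with hX
  have hfin : X.Finite :=
    Set.Finite.subset (Set.finite_Iio (2^n)) (fun x hx => hx.2.2.2.2)
  have hn1 : 1 ≤ n := by omega
  -- the counting bound
  have hcount : X.ncard ≤ n * mk k + 1 := by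
    by_contra hcon
    push_neg at hcon
    have hc2 : n * mk k + 2 ≤ hfin.toFinset.card := by
      rw [← Set.ncard_eq_toFinset_card X hfin]; omega
    obtain ⟨V, hVsub, hVcard⟩ := Finset.exists_subset_card_eq hc2
    have hVX : ∀ x ∈ V, x ∈ X := fun x hx => (Set.Finite.mem_toFinset hfin).mp (hVsub hx)
    have hVne : V.Nonempty := Finset.card_pos.mp (by omega)
    set v₀ := V.min' hVne with hv₀def
    obtain ⟨⟨j₀, hj₀⟩, hmv, hubv, h2N, h2n⟩ := hVX v₀ (V.min'_mem hVne)
    have hj₀' : W ξ j₀ ω = v₀ := (hS ω j₀).symm.trans hj₀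
    have hexj : ∃ jj, v₀ ≤ W ξ jj ω := ⟨j₀, le_of_eq hj₀'.symm⟩
    have hv₀pos : 1 ≤ v₀ := le_trans Nat.one_le_two_pow h2N
    have hJpos : Nat.find hexj ≠ 0 := by
      intro h0
      have := Nat.find_spec hexj
      rw [h0] at this
      simp only [W, Finset.range_zero, Finset.sum_empty] at this
      omega
    obtain ⟨t, ht⟩ : ∃ t, Nat.find hexj = t + 1 := ⟨Nat.find hexj - 1, by omega⟩
    have hWJle : W ξ (t+1) ω ≤ v₀ := by
      have h1 : Nat.find hexj ≤ j₀ := Nat.find_min' hexj (le_of_eq hj₀'.symm)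
      have h2 : W ξ (Nat.find hexj) ω ≤ W ξ j₀ ω := W_mono ω h1
      rw [ht] at h2
      omega
    have hWJge : v₀ ≤ W ξ (t+1) ω := by
      have h2 := Nat.find_spec hexj
      rw [ht] at h2
      exact h2
    have hWJ : W ξ (t+1) ω = v₀ := le_antisymm hWJle hWJge
    have hWt : W ξ t ω < v₀ := by
      have hmin := Nat.find_min hexj (show t < Nat.find hexj by omega)
      omega
    have hWsucc := W_succ (ξ := ξ) ω t
    have hξt : 1 ≤ ξ t ω := by omega
    have hEv : ω ∈ Ev ξ (n * mk k + 1) (t+1) (2^k) := by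
      refine lemB ω (n * mk k + 1) (t+1) (2^k) (V.erase v₀) ?_ ?_
      · rw [Finset.card_erase_of_mem (V.min'_mem hVne)]; omega
      · intro x hx
        rw [Finset.mem_erase] at hx
        obtain ⟨⟨jx, hjx⟩, hmx, hux, _, _⟩ := hVX x hx.2
        have hminle := V.min'_le x hx.2
        refine ⟨⟨jx, (hS ω jx).symm.trans hjx⟩, by omega, ?_⟩
        have hxz : (x:ℤ) < (v₀:ℤ) + 2^k := lt_of_lt_of_le hux (by omega)
        have hxn : x < v₀ + 2^k := by exact_mod_cast hxz
        omega
    have hbadmem : ω ∈ bad n := by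
      rw [hbad]
      refine Set.mem_biUnion (Finset.mem_range.mpr hk) ?_
      refine Set.mem_iUnion.mpr ⟨t, ?_⟩
      exact ⟨⟨hξt, by simp only [Set.mem_setOf_eq]; omega⟩, hEv⟩
    exact hN n (le_of_lt hn) hbadmem
  -- from the counting bound to the analytic bound
  set q' : ℝ := (P {ω' | 2^k < ξ 0 ω'}).toReal with hq'def
  have hq'pos : 0 < q' := ENNReal.toReal_pos (hpos (2^k)) (measure_ne_top P _)
  have hq'le1 : q' ≤ 1 := by
    rw [hq'def, show (1:ℝ) = (1:ℝ≥0∞).toReal by simp]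
    exact ENNReal.toReal_mono ENNReal.one_ne_top prob_le_one
  have hq'qr : q' ≤ qr k := by
    refine ENNReal.toReal_mono (hqtop k) ?_
    refine measure_mono ?_
    intro ω' hω'
    simp only [Set.mem_setOf_eq] at hω'
    simp only [Set.mem_preimage, Set.mem_Ici]
    omega
  have hmkb : (mk k : ℝ) ≤ 3 / qr k + 1 := le_of_lt (Nat.ceil_lt_add_one (by positivity))
  have hnR : (1:ℝ) ≤ (n:ℝ) := by exact_mod_cast hn1
  have hchain : (X.ncard : ℝ) ≤ 5 * n / q' := by
    have hdiv : 3 / qr k ≤ 3 / q' :=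
      div_le_div_of_nonneg_left (by norm_num) hq'pos hq'qr
    have h2n' : (2*n : ℝ) ≤ 2*n / q' := by
      rw [le_div_iff₀ hq'pos]
      nlinarith
    calc (X.ncard : ℝ) ≤ (n : ℝ) * (mk k) + 1 := by exact_mod_cast hcount
      _ ≤ (n : ℝ) * (3 / q' + 1) + 1 := by nlinarith [hmkb, hdiv]
      _ = 3 * n / q' + (n + 1) := by ring
      _ ≤ 3 * n / q' + 2 * n := by linarith
      _ ≤ 3 * n / q' + 2 * n / q' := by linarith
      _ = 5 * n / q' := by ring
  -- identify q' with the regularly varying expression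
  have htailk := htail (2^k) Nat.one_le_two_pow
  have hcast : ((2^k : ℕ) : ℝ) = (2:ℝ)^k := by push_cast; ring
  set B : ℝ := (2:ℝ) ^ (β * (k:ℝ)) with hBdef
  have hBpos : 0 < B := Real.rpow_pos_of_pos two_pos _
  have hTB : ((2:ℝ)^k : ℝ) ^ (-β) = B⁻¹ := by
    rw [← Real.rpow_natCast 2 k, ← Real.rpow_mul (by norm_num)]
    rw [show (k:ℝ) * (-β) = -(β * k) by ring]
    rw [Real.rpow_neg (by norm_num)]
  have hq'eq : q' = B⁻¹ * Lf ((2:ℝ)^k) := by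
    rw [hq'def, htailk, hcast, hTB]
  have hLfpos : 0 < Lf ((2:ℝ)^k) := by
    have hLf : Lf ((2:ℝ)^k) = q' * B := by
      rw [hq'eq]; field_simp
    rw [hLf]; positivity
  have hfinal : 5 * (n:ℝ) / q' = 5 * (n:ℝ) * B / Lf ((2:ℝ)^k) := by
    rw [hq'eq]
    field_simp
  calc (X.ncard : ℝ) ≤ 5 * n / q' := hchain
    _ = 5 * (n:ℝ) * B / Lf ((2:ℝ)^k) := hfinal
end

section
/- Let ξ_1, ξ_2, … be i.i.d. with distribution equal to H_# restricted (and normalized) to (x_0, x_n), where \overline{H_\#}(z) = exp(−q(z)) with q increasing, concave in the sense that each coordinate map of H_n(z_1,…,z_m) = Σ q(z_i) is concave. Then for any m and threshold x̃ with m x_0 < x̃, inf{Σ_{i=1}^m q(z_i) : Σ_{i=1}^m z_i > x̃, x_0 < z_i < x_n} ≥ k·q(x_n), where k = ⌈(x̃ − x_n − (m−1)x_0)/(x_n − x_0)⌉_+; in particular if m ≤ (x̃ − x_n)/(2x_0) + 1 then k ≥ (x̃ − x_n)/(2(x_n − x_0)). -/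
open Filter Set

lemma chord_aux (q : ℝ → ℝ) (x₀ xn : ℝ) (hxn : x₀ < xn)
    (hq_conc : ConcaveOn ℝ (Set.Ioi x₀) q)
    (hq_nonneg : ∀ z ∈ Set.Ioi x₀, 0 ≤ q z)
    (z : ℝ) (hz₁ : x₀ < z) (hz₂ : z ≤ xn) :
    (z - x₀) / (xn - x₀) * q xn ≤ q z := by
  have key : ∀ y ∈ Set.Ioo x₀ z, (z - y) / (xn - y) * q xn ≤ q z := by
    intro y hy
    have hyz : y < z := hy.2
    have hyx : x₀ < y := hy.1
    have hyn : y < xn := lt_of_lt_of_le hyz hz₂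
    have hd : (0:ℝ) < xn - y := by linarith
    have ha : (0:ℝ) ≤ (xn - z) / (xn - y) := div_nonneg (by linarith) hd.le
    have hb : (0:ℝ) ≤ (z - y) / (xn - y) := div_nonneg (by linarith) hd.le
    have hab : (xn - z) / (xn - y) + (z - y) / (xn - y) = 1 := by
      field_simp
      ring
    have := hq_conc.2 (Set.mem_Ioi.2 hyx) (Set.mem_Ioi.2 (lt_trans hyx hyn))
      ha hb hab
    have hcomb : ((xn - z) / (xn - y)) • y + ((z - y) / (xn - y)) • xn = z := by
      simp only [smul_eq_mul]
      field_simp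
      ring
    rw [hcomb] at this
    have hqy : 0 ≤ q y := hq_nonneg y hyx
    simp only [smul_eq_mul] at this
    nlinarith
  have hne : xn - x₀ ≠ 0 := by linarith
  have htend : Tendsto (fun y => (z - y) / (xn - y) * q xn) (nhdsWithin x₀ (Set.Ioi x₀))
      (nhds ((z - x₀) / (xn - x₀) * q xn)) := by
    apply Tendsto.mono_left _ nhdsWithin_le_nhds
    exact (((tendsto_const_nhds.sub tendsto_id).div
      (tendsto_const_nhds.sub tendsto_id) hne).mul tendsto_const_nhds)
  refine le_of_tendsto htend ?_
  filter_upwards [Ioo_mem_nhdsGT_of_mem (Set.left_mem_Ico.2 hz₁)] with y hy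
  exact key y hy

/-- Let `q : (x₀, ∞) → ℝ₊` be increasing and concave (so each coordinate map
of `H(z₁,…,z_m) = Σ q(zᵢ)` is concave). For any `m` and threshold `x̃` with `m x₀ < x̃`,
`inf {Σ q(zᵢ) : Σ zᵢ > x̃, x₀ < zᵢ < xₙ} ≥ k q(xₙ)`, where
`k = ⌈(x̃ - xₙ - (m-1) x₀)/(xₙ - x₀)⌉₊`; in particular if `m ≤ (x̃ - xₙ)/(2x₀) + 1`
then `k ≥ (x̃ - xₙ)/(2(xₙ - x₀))`. -/
theorem stmt19 (q : ℝ → ℝ) (x₀ xn xt : ℝ) (m : ℕ)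
    (hx₀ : 0 < x₀) (hxn : x₀ < xn)
    (hq_mono : MonotoneOn q (Set.Ioi x₀))
    (hq_conc : ConcaveOn ℝ (Set.Ioi x₀) q)
    (hq_nonneg : ∀ z ∈ Set.Ioi x₀, 0 ≤ q z)
    (hm : (m : ℝ) * x₀ < xt)
    (k : ℤ) (hk : k = max ⌈(xt - xn - ((m : ℝ) - 1) * x₀) / (xn - x₀)⌉ 0) :
    (∀ z : Fin m → ℝ, (∀ i, x₀ < z i ∧ z i < xn) → xt < ∑ i, z i →
        (k : ℝ) * q xn ≤ ∑ i, q (z i)) ∧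
      ((m : ℝ) ≤ (xt - xn) / (2 * x₀) + 1 →
        (xt - xn) / (2 * (xn - x₀)) ≤ (k : ℝ)) := by
  have hd : (0:ℝ) < xn - x₀ := by linarith
  set a : ℝ := (xt - xn - ((m : ℝ) - 1) * x₀) / (xn - x₀) with ha
  have hk0 : (0:ℤ) ≤ k := hk ▸ le_max_right _ _
  have hkle : (k : ℝ) < (xt - (m : ℝ) * x₀) / (xn - x₀) := by
    have hpos : 0 < (xt - (m : ℝ) * x₀) / (xn - x₀) := by
      apply div_pos <;> linarith
    have haeq : a + 1 = (xt - (m : ℝ) * x₀) / (xn - x₀) := by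
      rw [ha]; field_simp; ring
    rcases le_or_gt (⌈a⌉ : ℤ) 0 with h | h
    · have : k = 0 := by rw [hk, max_eq_right h]
      rw [this]; exact_mod_cast hpos
    · have : k = ⌈a⌉ := by rw [hk, max_eq_left h.le]
      rw [this, ← haeq]
      calc ((⌈a⌉ : ℤ) : ℝ) < a + 1 := by exact_mod_cast Int.ceil_lt_add_one a
        _ = a + 1 := rfl
  constructor
  · intro z hz hsum
    have hqxn : 0 ≤ q xn := hq_nonneg xn hxn
    have hper : ∀ i, (z i - x₀) / (xn - x₀) * q xn ≤ q (z i) := fun i =>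
      chord_aux q x₀ xn hxn hq_conc hq_nonneg (z i) (hz i).1 (hz i).2.le
    have hS : ∑ i, (z i - x₀) / (xn - x₀) = (∑ i, z i - (m : ℝ) * x₀) / (xn - x₀) := by
      rw [← Finset.sum_div, Finset.sum_sub_distrib]
      simp [mul_comm]
    have hkS : (k : ℝ) ≤ ∑ i, (z i - x₀) / (xn - x₀) := by
      rw [hS]
      have : (xt - (m : ℝ) * x₀) / (xn - x₀) ≤ (∑ i, z i - (m : ℝ) * x₀) / (xn - x₀) := by
        gcongr
      linarith [hkle]
    calc (k : ℝ) * q xn ≤ (∑ i, (z i - x₀) / (xn - x₀)) * q xn :=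
          mul_le_mul_of_nonneg_right hkS hqxn
      _ = ∑ i, (z i - x₀) / (xn - x₀) * q xn := Finset.sum_mul _ _ _
      _ ≤ ∑ i, q (z i) := Finset.sum_le_sum fun i _ => hper i
  · intro hmle
    rcases le_or_gt xt xn with h | h
    · have : (xt - xn) / (2 * (xn - x₀)) ≤ 0 := by
        apply div_nonpos_of_nonpos_of_nonneg <;> linarith
      have : (0:ℝ) ≤ (k:ℝ) := by exact_mod_cast hk0
      linarith
    · have hle : (xt - xn) / (2 * (xn - x₀)) ≤ a := by
        rw [ha, div_le_div_iff₀ (by linarith) hd]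
        have : ((m:ℝ) - 1) * x₀ ≤ (xt - xn) / 2 := by
          rw [le_div_iff₀ (by norm_num)]
          have := mul_le_mul_of_nonneg_right (sub_le_sub_right hmle 1) (le_of_lt (by positivity : (0:ℝ) < 2 * x₀))
          calc ((m:ℝ) - 1) * x₀ * 2 = ((m:ℝ) - 1) * (2 * x₀) := by ring
            _ ≤ ((xt - xn) / (2 * x₀) + 1 - 1) * (2 * x₀) := by
                apply mul_le_mul_of_nonneg_right (by linarith) (by positivity)
            _ = xt - xn := by field_simp; ring
        nlinarith
      have : a ≤ (k : ℝ) := by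
        have h1 : (⌈a⌉ : ℤ) ≤ k := hk ▸ le_max_left _ _
        calc a ≤ (⌈a⌉ : ℝ) := Int.le_ceil a
          _ ≤ (k : ℝ) := by exact_mod_cast h1
      linarith
end
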